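/- arXiv:0912.4720 — 4 statements merged into one kernel-verified Lean document; each statement's English description precedes it below -/
import Mathlib

section
/- Let L > 0 and N ≥ 2. Let f : ℝ → ℝ be lower semicontinuous on [0, L/2], and convex and antitone (decreasing) on [0, L/2]. Then for every configuration x_1, …, x_N of (not necessarily distinct) points of the circle ℝ/Lℤ, the geodesic f-energy satisfies Σ_{j≠k} f(dist(x_j, x_k)) ≥ Σ_{j≠k} f(dist(z_j, z_k)), where z_j = j·(L/N) mod L are the N equally spaced points; i.e., equally spaced points globally minimize the geodesic f-energy. -/
open Finset

/-- The geodesic `f`-energy of a configuration of `N` points on the circle `ℝ/Lℤ`: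
the sum of `f` of the geodesic distances over all ordered pairs of distinct indices. -/
noncomputable def geodesicEnergy {N : ℕ} (L : ℝ) (f : ℝ → ℝ) (x : Fin N → AddCircle L) : ℝ :=
  ∑ j : Fin N, ∑ k : Fin N, if j ≠ k then f (dist (x j) (x k)) else 0

lemma energy_perm {N : ℕ} (L : ℝ) (f : ℝ → ℝ) (x : Fin N → AddCircle L)
    (σ : Equiv.Perm (Fin N)) : geodesicEnergy L f (x ∘ σ) = geodesicEnergy L f x := by
  unfold geodesicEnergy
  refine Fintype.sum_equiv σ _ _ fun j => ?_
  refine Fintype.sum_equiv σ _ _ fun k => ?_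
  simp [σ.injective.ne_iff]

lemma energy_shift {N : ℕ} [NeZero N] (L : ℝ) (f : ℝ → ℝ) (w : Fin N → AddCircle L) :
    geodesicEnergy L f w
      = ∑ c : Fin N, ∑ j : Fin N, if c ≠ 0 then f (dist (w j) (w (j + c))) else 0 := by
  unfold geodesicEnergy
  have : ∀ j : Fin N, (∑ k : Fin N, if j ≠ k then f (dist (w j) (w k)) else 0)
      = ∑ c : Fin N, if c ≠ 0 then f (dist (w j) (w (j + c))) else 0 := by
    intro j
    refine (Fintype.sum_equiv (Equiv.subRight j) _ _ fun k => ?_)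
    simp only [Equiv.subRight_apply]
    have h2 : j + (k - j) = k := by abel
    rw [h2]
    have hiff : j ≠ k ↔ k - j ≠ 0 := by
      constructor
      · intro h h3; exact h (by rw [sub_eq_zero] at h3; exact h3.symm)
      · intro h h3; exact h (by rw [sub_eq_zero, h3])
    by_cases hc : j = k
    · rw [if_neg (by simpa using hc), if_neg (by simpa using (not_not.mpr (sub_eq_zero.mpr hc.symm)))]
    · rw [if_pos hc, if_pos (hiff.mp hc)]
  rw [Finset.sum_congr rfl fun j _ => this j, Finset.sum_comm]

lemma norm_coe_eq_min {L : ℝ} (hL : 0 < L) {t : ℝ} (h0 : 0 ≤ t) (h1 : t ≤ L) :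
    ‖((t : ℝ) : AddCircle L)‖ = min t (L - t) := by
  rw [AddCircle.norm_eq]
  rcases lt_or_ge (2 * t) L with h | h
  · have hr : round (L⁻¹ * t) = 0 := by
      rw [round_eq_zero_iff]
      have h2 : L⁻¹ * t < 1 / 2 := by rw [inv_mul_lt_iff₀ hL]; linarith
      have h3 : 0 ≤ L⁻¹ * t := by positivity
      exact ⟨by linarith, h2⟩
    rw [hr, min_eq_left (by linarith)]
    push_cast
    rw [zero_mul, sub_zero, abs_of_nonneg h0]
  · have hr : round (L⁻¹ * t) = 1 := by
      rw [round_eq]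
      have h2 : 1 / 2 ≤ L⁻¹ * t := by rw [le_inv_mul_iff₀ hL]; linarith
      have h3 : L⁻¹ * t ≤ 1 := by rw [inv_mul_le_iff₀ hL]; linarith
      rw [Int.floor_eq_iff]
      push_cast
      constructor <;> linarith
    rw [hr, min_eq_right (by linarith)]
    push_cast
    rw [one_mul, abs_of_nonpos (by linarith), neg_sub]

lemma convexOn_gmin {L : ℝ} (hL : 0 < L) {f : ℝ → ℝ}
    (hconv : ConvexOn ℝ (Set.Icc 0 (L / 2)) f) (hanti : AntitoneOn f (Set.Icc 0 (L / 2))) :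
    ConvexOn ℝ (Set.Icc 0 L) (fun t => f (min t (L - t))) := by
  refine ⟨convex_Icc _ _, ?_⟩
  rintro a ⟨ha0, haL⟩ b ⟨hb0, hbL⟩ p q hp hq hpq
  simp only [smul_eq_mul]
  set ma := min a (L - a) with hma_def
  set mb := min b (L - b) with hmb_def
  set s := p * a + q * b with hs_def
  have hma : ma ∈ Set.Icc 0 (L / 2) := by
    constructor
    · exact le_min ha0 (by linarith)
    · rcases le_total a (L / 2) with h | h
      · exact le_trans (min_le_left _ _) h
      · exact le_trans (min_le_right _ _) (by linarith)
  have hmb : mb ∈ Set.Icc 0 (L / 2) := by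
    constructor
    · exact le_min hb0 (by linarith)
    · rcases le_total b (L / 2) with h | h
      · exact le_trans (min_le_left _ _) h
      · exact le_trans (min_le_right _ _) (by linarith)
  have hcomb : p * ma + q * mb ∈ Set.Icc 0 (L / 2) := by
    constructor
    · have := mul_nonneg hp hma.1
      have := mul_nonneg hq hmb.1
      linarith
    · have := mul_le_mul_of_nonneg_left hma.2 hp
      have := mul_le_mul_of_nonneg_left hmb.2 hq
      nlinarith
  have hs0 : 0 ≤ s := by nlinarith
  have hsL : s ≤ L := by nlinarith
  have hms : min s (L - s) ∈ Set.Icc 0 (L / 2) := by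
    constructor
    · exact le_min hs0 (by linarith)
    · rcases le_total s (L / 2) with h | h
      · exact le_trans (min_le_left _ _) h
      · exact le_trans (min_le_right _ _) (by linarith)
  have hle : p * ma + q * mb ≤ min s (L - s) := by
    apply le_min
    · have h1 : ma ≤ a := min_le_left _ _
      have h2 : mb ≤ b := min_le_left _ _
      nlinarith
    · have h1 : ma ≤ L - a := min_le_right _ _
      have h2 : mb ≤ L - b := min_le_right _ _
      nlinarith
  calc f (min s (L - s)) ≤ f (p * ma + q * mb) := hanti hcomb hms hle
    _ ≤ p * f ma + q * f mb := by
        have := hconv.2 hma hmb hp hq hpq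
        simpa using this

lemma core_shift {N : ℕ} [NeZero N] {L : ℝ} (hL : 0 < L) {f : ℝ → ℝ}
    (hconv : ConvexOn ℝ (Set.Icc 0 (L / 2)) f) (hanti : AntitoneOn f (Set.Icc 0 (L / 2)))
    (u : Fin N → ℝ) (hmono : Monotone u) (hu : ∀ j, u j ∈ Set.Ico 0 L) (c : Fin N) :
    ∑ j : Fin N, f (dist (((((j : ℕ) : ℝ) * (L / N) : ℝ)) : AddCircle L)
        ((((((j + c : Fin N) : ℕ) : ℝ) * (L / N) : ℝ)) : AddCircle L))
      ≤ ∑ j : Fin N, f (dist ((u j : ℝ) : AddCircle L) ((u (j + c) : ℝ) : AddCircle L)) := by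
  have hNpos : 0 < N := Nat.pos_of_ne_zero (NeZero.ne N)
  have hNR : (0:ℝ) < (N:ℝ) := by exact_mod_cast hNpos
  have hcN : (c : ℕ) < N := c.isLt
  set g : ℝ → ℝ := fun t => f (min t (L - t)) with hg_def
  set T : ℝ := ((c : ℕ) : ℝ) * (L / N) with hT_def
  have hT0 : 0 ≤ T := by positivity
  have hTL : T ≤ L := by
    rw [hT_def]
    calc ((c : ℕ) : ℝ) * (L / N) ≤ (N : ℝ) * (L / N) := by
          apply mul_le_mul_of_nonneg_right _ (by positivity)
          exact_mod_cast hcN.le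
      _ = L := by field_simp
  -- value of (j+c).val
  have hval : ∀ j : Fin N, ((j + c : Fin N) : ℕ) = ((j : ℕ) + (c : ℕ)) % N := fun j => Fin.val_add j c
  have hval_lt : ∀ j : Fin N, (j : ℕ) + (c : ℕ) < N → ((j + c : Fin N) : ℕ) = (j : ℕ) + (c : ℕ) :=
    fun j h => by rw [hval j, Nat.mod_eq_of_lt h]
  have hval_ge : ∀ j : Fin N, ¬ ((j : ℕ) + (c : ℕ) < N) →
      ((j + c : Fin N) : ℕ) = (j : ℕ) + (c : ℕ) - N := by
    intro j h
    rw [hval j, Nat.mod_eq_sub_mod (le_of_not_gt h), Nat.mod_eq_of_lt (by omega)]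
  -- equally spaced side
  have hz : ∀ j : Fin N,
      dist (((((j : ℕ) : ℝ) * (L / N) : ℝ)) : AddCircle L)
        ((((((j + c : Fin N) : ℕ) : ℝ) * (L / N) : ℝ)) : AddCircle L) = min T (L - T) := by
    intro j
    rw [dist_comm, dist_eq_norm, ← AddCircle.coe_sub]
    by_cases h : (j : ℕ) + (c : ℕ) < N
    · have : ((((j + c : Fin N) : ℕ) : ℝ) * (L / N) : ℝ) - (((j : ℕ) : ℝ) * (L / N)) = T := by
        rw [hval_lt j h]; push_cast; rw [hT_def]; ring
      rw [this, norm_coe_eq_min hL hT0 hTL]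
    · have hv : ((((j + c : Fin N) : ℕ) : ℝ) * (L / N) : ℝ) - (((j : ℕ) : ℝ) * (L / N)) = T - L := by
        rw [hval_ge j h]
        have hle : N ≤ (j : ℕ) + (c : ℕ) := le_of_not_gt h
        rw [Nat.cast_sub hle]
        push_cast
        rw [hT_def]; field_simp; ring
      rw [hv]
      have : ((T - L : ℝ) : AddCircle L) = ((T : ℝ) : AddCircle L) := by
        have := AddCircle.coe_add_period L (T - L)
        simpa using this
      rw [this, norm_coe_eq_min hL hT0 hTL]
  -- arcs
  set arc : Fin N → ℝ := fun j => u (j + c) - u j + (if (j : ℕ) + (c : ℕ) < N then 0 else L)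
    with harc_def
  have harc_mem : ∀ j : Fin N, arc j ∈ Set.Icc 0 L := by
    intro j
    by_cases h : (j : ℕ) + (c : ℕ) < N
    · have hle : j ≤ j + c := by
        rw [Fin.le_def, hval_lt j h]; omega
      have := hmono hle
      have h1 := (hu j).1
      have h2 := (hu (j + c)).2
      simp only [harc_def, if_pos h]
      constructor <;> [linarith; linarith]
    · have hle : j + c ≤ j := by
        rw [Fin.le_def, hval_ge j h]; omega
      have := hmono hle
      have h1 := (hu (j + c)).1
      have h2 := (hu j).2
      simp only [harc_def, if_neg h]
      constructor <;> [linarith; linarith]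
  have hdist_arc : ∀ j : Fin N,
      f (dist ((u j : ℝ) : AddCircle L) ((u (j + c) : ℝ) : AddCircle L)) = g (arc j) := by
    intro j
    rw [dist_comm, dist_eq_norm, ← AddCircle.coe_sub]
    by_cases h : (j : ℕ) + (c : ℕ) < N
    · have he : arc j = u (j + c) - u j := by simp only [harc_def, if_pos h]; ring
      rw [hg_def]
      simp only
      rw [← he, norm_coe_eq_min hL (harc_mem j).1 (harc_mem j).2]
    · have he : u (j + c) - u j = arc j - L := by simp only [harc_def, if_neg h]; ring
      rw [he]
      have hco : ((arc j - L : ℝ) : AddCircle L) = ((arc j : ℝ) : AddCircle L) := by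
        have := AddCircle.coe_add_period L (arc j - L)
        simpa using this
      rw [hco, hg_def]
      simp only
      rw [norm_coe_eq_min hL (harc_mem j).1 (harc_mem j).2]
  -- sum of arcs
  have hcount : ∑ j : Fin N, (if (j : ℕ) + (c : ℕ) < N then (0:ℝ) else L) = ((c : ℕ) : ℝ) * L := by
    rw [Fin.sum_univ_eq_sum_range (fun j => if j + (c : ℕ) < N then (0:ℝ) else L) N]
    rw [Finset.sum_ite, Finset.sum_const_zero, Finset.sum_const, zero_add]
    have hfil : (Finset.range N).filter (fun j => ¬ (j + (c : ℕ) < N)) = Finset.Ico (N - (c:ℕ)) N := by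
      ext j
      simp only [Finset.mem_filter, Finset.mem_range, Finset.mem_Ico, not_lt]
      omega
    rw [hfil, Nat.card_Ico]
    have : N - (N - (c:ℕ)) = (c:ℕ) := by omega
    rw [this, nsmul_eq_mul]
  have hshift_sum : ∑ j : Fin N, u (j + c) = ∑ j : Fin N, u j := by
    exact Equiv.sum_comp (Equiv.addRight c) u
  have harc_sum : ∑ j : Fin N, arc j = ((c : ℕ) : ℝ) * L := by
    simp only [harc_def]
    rw [Finset.sum_add_distrib, Finset.sum_sub_distrib, hshift_sum, hcount]
    ring
  -- Jensen
  have hg := convexOn_gmin hL hconv hanti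
  have hw1 : ∑ _j : Fin N, (N:ℝ)⁻¹ = 1 := by
    rw [Finset.sum_const, Finset.card_univ, Fintype.card_fin, nsmul_eq_mul,
      mul_inv_cancel₀ hNR.ne']
  have hjensen := hg.map_sum_le (t := Finset.univ) (w := fun _ : Fin N => (N:ℝ)⁻¹) (p := arc)
    (fun _ _ => by positivity) hw1 (fun j _ => harc_mem j)
  have hmean : ∑ j : Fin N, (N:ℝ)⁻¹ • arc j = T := by
    simp only [smul_eq_mul]
    rw [← Finset.mul_sum, harc_sum, hT_def]
    field_simp
  rw [hmean] at hjensen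
  calc ∑ j : Fin N, f (dist (((((j : ℕ) : ℝ) * (L / N) : ℝ)) : AddCircle L)
        ((((((j + c : Fin N) : ℕ) : ℝ) * (L / N) : ℝ)) : AddCircle L))
      = ∑ j : Fin N, g T := by
        refine Finset.sum_congr rfl fun j _ => ?_
        rw [hz j, hg_def]
    _ = (N : ℝ) * g T := by rw [Finset.sum_const, Finset.card_univ, Fintype.card_fin, nsmul_eq_mul]
    _ ≤ (N : ℝ) * ∑ j : Fin N, (N:ℝ)⁻¹ * g (arc j) := by
        apply mul_le_mul_of_nonneg_left hjensen hNR.le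
    _ = ∑ j : Fin N, g (arc j) := by
        rw [← Finset.mul_sum, ← mul_assoc, mul_inv_cancel₀ hNR.ne', one_mul]
    _ = ∑ j : Fin N, f (dist ((u j : ℝ) : AddCircle L) ((u (j + c) : ℝ) : AddCircle L)) := by
        refine Finset.sum_congr rfl fun j _ => (hdist_arc j).symm

/-- **Optimality of equally spaced points** (Proposition 1 (A), existence part):
if `f` is lower semicontinuous on `[0, L/2]` and convex and antitone there, then the
`N` equally spaced points `z_j = j·(L/N) mod L` minimize the geodesic `f`-energy among
all `N`-point configurations on the circle `ℝ/Lℤ`. -/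
theorem equally_spaced_minimize_geodesic_energy
    (L : ℝ) (hL : 0 < L) (N : ℕ) (hN : 2 ≤ N) (f : ℝ → ℝ)
    (hlsc : LowerSemicontinuousOn f (Set.Icc 0 (L / 2)))
    (hconv : ConvexOn ℝ (Set.Icc 0 (L / 2)) f)
    (hanti : AntitoneOn f (Set.Icc 0 (L / 2)))
    (x : Fin N → AddCircle L) :
    geodesicEnergy L f (fun j : Fin N => (((j : ℕ) : ℝ) * (L / N) : ℝ))
      ≤ geodesicEnergy L f x := by
  haveI : NeZero N := ⟨by omega⟩
  haveI : Fact (0 < L) := ⟨hL⟩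
  set t : Fin N → ℝ := fun j => ((AddCircle.equivIco L 0 (x j)) : ℝ) with ht_def
  set σ := Tuple.sort t with hσ_def
  set u : Fin N → ℝ := t ∘ σ with hu_def
  have hmono : Monotone u := Tuple.monotone_sort t
  have hu : ∀ j, u j ∈ Set.Ico 0 L := by
    intro j
    have := (AddCircle.equivIco L 0 (x (σ j))).2
    simpa [hu_def, ht_def] using this
  have hxσ : x ∘ σ = fun j => ((u j : ℝ) : AddCircle L) := by
    funext j
    exact ((AddCircle.equivIco L 0).symm_apply_apply (x (σ j))).symm
  have h1 : geodesicEnergy L f x = geodesicEnergy L f (fun j => ((u j : ℝ) : AddCircle L)) := by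
    rw [← energy_perm L f x σ, hxσ]
  rw [h1, energy_shift, energy_shift]
  apply Finset.sum_le_sum
  intro c _
  by_cases hc : c = 0
  · simp [hc]
  · have e1 : ∀ j : Fin N, (if c ≠ 0 then
        f (dist ((fun j : Fin N => ((((j : ℕ) : ℝ) * (L / N) : ℝ) : AddCircle L)) j)
          ((fun j : Fin N => ((((j : ℕ) : ℝ) * (L / N) : ℝ) : AddCircle L)) (j + c))) else 0)
        = f (dist (((((j : ℕ) : ℝ) * (L / N) : ℝ)) : AddCircle L)
            ((((((j + c : Fin N) : ℕ) : ℝ) * (L / N) : ℝ)) : AddCircle L)) := fun j => if_pos hc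
    have e2 : ∀ j : Fin N, (if c ≠ 0 then
        f (dist ((fun j => ((u j : ℝ) : AddCircle L)) j)
          ((fun j => ((u j : ℝ) : AddCircle L)) (j + c))) else 0)
        = f (dist ((u j : ℝ) : AddCircle L) ((u (j + c) : ℝ) : AddCircle L)) := fun j => if_pos hc
    rw [Finset.sum_congr rfl fun j _ => e1 j, Finset.sum_congr rfl fun j _ => e2 j]
    exact core_shift hL hconv hanti u hmono hu c
end

section
/- Let L > 0 and N ≥ 2. Let f : ℝ → ℝ be antitone on [0, L/2] and strictly convex on [0, L/2]. If a configuration x_1, …, x_N of points of ℝ/Lℤ satisfies Σ_{j≠k} f(dist(x_j, x_k)) = Σ_{j≠k} f(dist(z_j, z_k)), where z_j = j·(L/N) mod L, then the configuration is itself equally spaced: there exist c ∈ ℝ/Lℤ and a permutation σ of {1,…,N} such that x_{σ(j)} = c + j·(L/N) mod L for all j. In other words, up to translation along the circle, equally spaced points are the unique minimizers of the geodesic f-energy. -/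
open Finset
open Fin.NatCast Fin.CommRing

namespace ESUM

lemma dist_coe_le_abs (L : ℝ) (a b : ℝ) :
    dist ((a : AddCircle L)) (b : AddCircle L) ≤ |a - b| := by
  rw [dist_eq_norm, ← AddCircle.coe_sub]
  simpa only [Real.norm_eq_abs] using QuotientAddGroup.norm_mk_le_norm (S := _) (m := a - b)

lemma dist_le_half {L : ℝ} (hL : 0 < L) (c c' : AddCircle L) : dist c c' ≤ L / 2 := by
  rw [dist_eq_norm]
  simpa [abs_of_pos hL] using AddCircle.norm_le_half_period (p := L) hL.ne'

lemma coe_sub_period (L t : ℝ) : ((t : ℝ) : AddCircle L) = ((t - L : ℝ) : AddCircle L) := by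
  rw [← AddCircle.coe_add_period L (t - L)]; norm_num

lemma norm_coe_min {L : ℝ} (hL : 0 < L) {t : ℝ} (h0 : 0 ≤ t) (h1 : t ≤ L) :
    ‖(t : AddCircle L)‖ = min t (L - t) := by
  have hub : ‖(t : AddCircle L)‖ ≤ min t (L - t) := by
    refine le_min ?_ ?_
    · simpa [Real.norm_eq_abs, abs_of_nonneg h0] using QuotientAddGroup.norm_mk_le_norm (S := _) (m := t)
    · rw [coe_sub_period L t]
      have := QuotientAddGroup.norm_mk_le_norm (S := AddSubgroup.zmultiples L) (m := t - L)
      simpa [Real.norm_eq_abs, abs_of_nonpos (by linarith : t - L ≤ 0)] using this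
  have hlb : min t (L - t) ≤ ‖(t : AddCircle L)‖ := by
    rw [AddCircle.norm_eq]
    set k : ℤ := round (L⁻¹ * t) with hk
    rcases le_or_gt k 0 with h | h
    · have hkL : (k : ℝ) * L ≤ 0 :=
        mul_nonpos_of_nonpos_of_nonneg (by exact_mod_cast h) hL.le
      have : t ≤ |t - k * L| := by rw [abs_of_nonneg (by linarith)]; linarith
      exact le_trans (min_le_left _ _) this
    · have h1' : (1 : ℝ) ≤ (k : ℝ) := by exact_mod_cast h
      have : L - t ≤ |t - k * L| := by
        have : (k : ℝ) * L ≥ L := by nlinarith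
        rw [abs_of_nonpos (by linarith)]; linarith
      exact le_trans (min_le_right _ _) this
  linarith

lemma dist_coe_eq_min {L : ℝ} (hL : 0 < L) {a b : ℝ} (hab : a ≤ b) (h : b - a ≤ L) :
    dist ((a : AddCircle L)) (b : AddCircle L) = min (b - a) (L - (b - a)) := by
  rw [dist_eq_norm, ← AddCircle.coe_sub, show ((a - b : ℝ) : AddCircle L) = -((b - a : ℝ) : AddCircle L) by
      rw [← AddCircle.coe_neg]; norm_num, norm_neg]
  exact norm_coe_min hL (by linarith) h

lemma sum_pairs (N : ℕ) [NeZero N] (G : Fin N → Fin N → ℝ) :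
    (∑ j : Fin N, ∑ k : Fin N, if j ≠ k then G j k else 0)
      = ∑ m : Fin N, if m ≠ 0 then (∑ i : Fin N, G i (i + m)) else 0 := by
  have h1 : ∀ j : Fin N, (∑ k : Fin N, if j ≠ k then G j k else 0)
      = ∑ m : Fin N, if m ≠ 0 then G j (j + m) else 0 := by
    intro j
    refine Fintype.sum_equiv (Equiv.subRight j) _ _ fun k => ?_
    simp only [Equiv.subRight_apply]
    by_cases hk : j = k
    · simp [hk]
    · rw [if_pos hk, if_pos (sub_ne_zero.mpr (Ne.symm hk)), add_sub_cancel]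
  simp_rw [h1]
  rw [Finset.sum_comm]
  refine Finset.sum_congr rfl fun m _ => ?_
  split <;> simp

lemma sum_shift (N : ℕ) [NeZero N] (h : Fin N → ℝ) (c : Fin N) :
    (∑ i : Fin N, h (i + c)) = ∑ i : Fin N, h i :=
  Fintype.sum_equiv (Equiv.addRight c) _ _ fun i => rfl

lemma chain_triangle {L : ℝ} (N : ℕ) [NeZero N] (w : Fin N → AddCircle L) (i : Fin N) (k : ℕ) :
    dist (w i) (w (i + (k : Fin N)))
      ≤ ∑ s ∈ Finset.range k, dist (w (i + (s : Fin N))) (w (i + (s : Fin N) + 1)) := by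
  induction k with
  | zero => simp
  | succ k ih =>
      rw [Finset.sum_range_succ]
      refine le_trans (dist_triangle _ (w (i + (k : Fin N))) _) ?_
      have : ((k + 1 : ℕ) : Fin N) = (k : Fin N) + 1 := by push_cast; ring
      rw [this, ← add_assoc]
      linarith [ih]

lemma avg_eq {N : ℕ} (hN : 0 < N) (t : Fin N → ℝ) :
    ∑ i : Fin N, (N : ℝ)⁻¹ • t i = (∑ i, t i) / N := by
  rw [← Finset.smul_sum, smul_eq_mul]; ring

lemma jensen_lb {L : ℝ} (hL : 0 < L) {N : ℕ} (hN : 0 < N) {f : ℝ → ℝ}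
    (hanti : AntitoneOn f (Set.Icc 0 (L / 2)))
    (hconv : StrictConvexOn ℝ (Set.Icc 0 (L / 2)) f)
    (t : Fin N → ℝ) (hmem : ∀ i, t i ∈ Set.Icc 0 (L / 2))
    {s : ℝ} (hs0 : 0 ≤ s) (hs2 : s ≤ L / 2) (hsum : ∑ i, t i ≤ N * s) :
    (N : ℝ) * f s ≤ ∑ i, f (t i) := by
  have hNR : (0 : ℝ) < N := by exact_mod_cast hN
  have hw1 : ∑ _i : Fin N, (N : ℝ)⁻¹ = 1 := by
    rw [Finset.sum_const, Finset.card_univ, Fintype.card_fin, nsmul_eq_mul]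
    field_simp
  have hj := hconv.convexOn.map_sum_le (t := Finset.univ) (w := fun _ => (N : ℝ)⁻¹) (p := t)
    (fun i _ => by positivity) hw1 (fun i _ => hmem i)
  rw [avg_eq hN, avg_eq hN] at hj
  set m : ℝ := (∑ i, t i) / N with hm
  have hm0 : 0 ≤ m := by
    have : (0:ℝ) ≤ ∑ i, t i := Finset.sum_nonneg fun i _ => (hmem i).1
    positivity
  have hms : m ≤ s := by rw [hm, div_le_iff₀ hNR]; linarith
  have h1 : f s ≤ f m := hanti ⟨hm0, hms.trans hs2⟩ ⟨hs0, hs2⟩ hms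
  have h2 : f m ≤ (∑ i, f (t i)) / N := hj
  calc (N : ℝ) * f s ≤ N * f m := by nlinarith
    _ ≤ N * ((∑ i, f (t i)) / N) := by nlinarith
    _ = ∑ i, f (t i) := by field_simp

lemma eq_case {L : ℝ} (hL : 0 < L) {N : ℕ} (hN : 2 ≤ N) {f : ℝ → ℝ}
    (hanti : AntitoneOn f (Set.Icc 0 (L / 2)))
    (hconv : StrictConvexOn ℝ (Set.Icc 0 (L / 2)) f)
    (t : Fin N → ℝ) (hmem : ∀ i, t i ∈ Set.Icc 0 (L / 2))
    (hsum : ∑ i, t i ≤ L) (hfe : ∑ i, f (t i) ≤ (N : ℝ) * f (L / N)) :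
    ∀ i, t i = L / N := by
  have hN0 : 0 < N := by omega
  have hNR : (0 : ℝ) < N := by exact_mod_cast hN0
  have hN2R : (2 : ℝ) ≤ N := by exact_mod_cast hN
  have hLN2 : L / N ≤ L / 2 :=
    div_le_div_of_nonneg_left hL.le (by norm_num) hN2R
  have hLN0 : 0 < L / N := by positivity
  have hw1 : ∑ _i : Fin N, (N : ℝ)⁻¹ = 1 := by
    rw [Finset.sum_const, Finset.card_univ, Fintype.card_fin, nsmul_eq_mul]
    field_simp
  set m : ℝ := (∑ i, t i) / N with hm
  have hm0 : 0 ≤ m := by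
    have : (0:ℝ) ≤ ∑ i, t i := Finset.sum_nonneg fun i _ => (hmem i).1
    positivity
  have hms : m ≤ L / N := by
    rw [hm, div_le_div_iff₀ hNR hNR]; nlinarith
  have hm_mem : m ∈ Set.Icc 0 (L / 2) := ⟨hm0, hms.trans hLN2⟩
  have h1 : f (L / N) ≤ f m := hanti hm_mem ⟨hLN0.le, hLN2⟩ hms
  -- equality in Jensen
  have key : ∑ i : Fin N, (N : ℝ)⁻¹ • f (t i) ≤ f (∑ i : Fin N, (N : ℝ)⁻¹ • t i) := by
    rw [avg_eq hN0, avg_eq hN0, ← hm]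
    have : (∑ i, f (t i)) / N ≤ f (L / N) := by
      rw [div_le_iff₀ hNR]; nlinarith
    exact this.trans h1
  have hall : ∀ ⦃j⦄, j ∈ Finset.univ → ∀ ⦃k⦄, k ∈ (Finset.univ : Finset (Fin N)) → t j = t k :=
    hconv.eq_of_le_map_sum (fun i _ => by positivity) hw1 (fun i _ => hmem i) key
  have hti : ∀ i, t i = m := by
    intro i
    have hconst : ∀ j, t j = t i := fun j => hall (Finset.mem_univ j) (Finset.mem_univ i)
    have : (∑ j, t j) = N * t i := by
      rw [Finset.sum_congr rfl fun j _ => hconst j]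
      rw [Finset.sum_const, Finset.card_univ, Fintype.card_fin, nsmul_eq_mul]
    rw [hm, this]; field_simp
  have hfm : f m ≤ f (L / N) := by
    have : (N : ℝ) * f m ≤ (N : ℝ) * f (L / N) := by
      calc (N : ℝ) * f m = ∑ i : Fin N, f (t i) := by
            rw [Finset.sum_congr rfl fun i _ => by rw [hti i]]
            rw [Finset.sum_const, Finset.card_univ, Fintype.card_fin, nsmul_eq_mul]
        _ ≤ (N : ℝ) * f (L / N) := hfe
    nlinarith
  have hfeq : f m = f (L / N) := le_antisymm hfm h1
  have hmLN : m = L / N := by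
    by_contra hne
    have hmlt : m < L / N := lt_of_le_of_ne hms hne
    have hstrict := hconv.2 hm_mem ⟨hLN0.le, hLN2⟩ hne
      (by norm_num : (0:ℝ) < 1/2) (by norm_num : (0:ℝ) < 1/2) (by norm_num)
    set u : ℝ := (1/2 : ℝ) • m + (1/2 : ℝ) • (L / N) with hu
    have huval : u = (m + L / N) / 2 := by rw [hu]; ring_nf
    have huLN : u ≤ L / N := by rw [huval]; linarith
    have hu0 : 0 ≤ u := by rw [huval]; positivity
    have hanti_u : f (L / N) ≤ f u :=
      hanti ⟨hu0, huLN.trans hLN2⟩ ⟨hLN0.le, hLN2⟩ huLN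
    have : f u < (1/2) * f m + (1/2) * f (L / N) := by
      simpa [smul_eq_mul] using hstrict
    nlinarith
  exact fun i => (hti i).trans hmLN

/-- Step-`k` lower bound for the energy of one "chord class". -/
lemma class_lb {L : ℝ} (hL : 0 < L) {N : ℕ} [NeZero N] {f : ℝ → ℝ}
    (hanti : AntitoneOn f (Set.Icc 0 (L / 2)))
    (hconv : StrictConvexOn ℝ (Set.Icc 0 (L / 2)) f)
    (w : Fin N → AddCircle L)
    (hd : ∑ i : Fin N, dist (w i) (w (i + 1)) ≤ L)
    {k : ℕ} (hk1 : 1 ≤ k) (hk2 : 2 * k ≤ N) :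
    (N : ℝ) * f ((k : ℝ) * L / N) ≤ ∑ i : Fin N, f (dist (w i) (w (i + (k : Fin N)))) := by
  have hN0 : 0 < N := Nat.pos_of_ne_zero (NeZero.ne N)
  have hNR : (0 : ℝ) < N := by exact_mod_cast hN0
  set d : Fin N → ℝ := fun i => dist (w i) (w (i + 1)) with hdd
  set A : Fin N → ℝ := fun i => ∑ s ∈ Finset.range k, d (i + (s : Fin N)) with hA
  set t : Fin N → ℝ := fun i => min (A i) (L / 2) with ht
  have hd0 : ∀ i, 0 ≤ d i := fun i => dist_nonneg
  have hA0 : ∀ i, 0 ≤ A i := fun i => Finset.sum_nonneg fun s _ => hd0 _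
  have htmem : ∀ i, t i ∈ Set.Icc 0 (L / 2) :=
    fun i => ⟨le_min (hA0 i) (by linarith), min_le_right _ _⟩
  have hdist_le : ∀ i, dist (w i) (w (i + (k : Fin N))) ≤ t i := by
    intro i
    refine le_min ?_ (dist_le_half hL _ _)
    exact chain_triangle N w i k
  have hdistmem : ∀ i, dist (w i) (w (i + (k : Fin N))) ∈ Set.Icc 0 (L / 2) :=
    fun i => ⟨dist_nonneg, dist_le_half hL _ _⟩
  have hf_le : ∀ i, f (t i) ≤ f (dist (w i) (w (i + (k : Fin N)))) :=
    fun i => hanti (hdistmem i) (htmem i) (hdist_le i)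
  have hAsum : ∑ i, A i = (k : ℝ) * ∑ i, d i := by
    calc ∑ i, A i = ∑ i : Fin N, ∑ s ∈ Finset.range k, d (i + (s : Fin N)) := rfl
      _ = ∑ s ∈ Finset.range k, ∑ i : Fin N, d (i + (s : Fin N)) := Finset.sum_comm
      _ = ∑ s ∈ Finset.range k, ∑ i : Fin N, d i :=
          Finset.sum_congr rfl fun s _ => sum_shift N d _
      _ = (k : ℝ) * ∑ i, d i := by
          rw [Finset.sum_const, Finset.card_range, nsmul_eq_mul]
  have htsum : ∑ i, t i ≤ (N : ℝ) * ((k : ℝ) * L / N) := by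
    have h1 : ∑ i, t i ≤ ∑ i, A i := Finset.sum_le_sum fun i _ => min_le_left _ _
    have h2 : (k : ℝ) * ∑ i, d i ≤ (k : ℝ) * L := by
      have : (0:ℝ) ≤ (k:ℝ) := by positivity
      nlinarith
    have h3 : (N : ℝ) * ((k : ℝ) * L / N) = (k : ℝ) * L := by field_simp
    rw [h3]
    calc ∑ i, t i ≤ ∑ i, A i := h1
      _ = (k : ℝ) * ∑ i, d i := hAsum
      _ ≤ (k : ℝ) * L := h2
  have hk2' : (k : ℝ) * L / N ≤ L / 2 := by
    rw [div_le_div_iff₀ hNR (by norm_num : (0:ℝ) < 2)]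
    have : (2 : ℝ) * k ≤ N := by exact_mod_cast hk2
    nlinarith
  have hs0 : 0 ≤ (k : ℝ) * L / N := by positivity
  calc (N : ℝ) * f ((k : ℝ) * L / N) ≤ ∑ i, f (t i) :=
        jensen_lb hL hN0 hanti hconv t htmem hs0 hk2' htsum
    _ ≤ ∑ i, f (dist (w i) (w (i + (k : Fin N)))) := Finset.sum_le_sum fun i _ => hf_le i

lemma Z_add {L : ℝ} {N : ℕ} [NeZero N] (i m : Fin N) :
    (((((i + m : Fin N) : ℕ) : ℝ) * (L / (N : ℝ)) : ℝ) : AddCircle L) =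
      (((((i : ℕ) + (m : ℕ) : ℕ) : ℝ) * (L / (N : ℝ)) : ℝ) : AddCircle L) := by
  have hN0 : 0 < N := Nat.pos_of_ne_zero (NeZero.ne N)
  have hv : ((i + m : Fin N) : ℕ) = ((i : ℕ) + (m : ℕ)) % N := Fin.val_add i m
  rcases Nat.lt_or_ge ((i : ℕ) + (m : ℕ)) N with h | h
  · rw [hv, Nat.mod_eq_of_lt h]
  · have hlt : (i : ℕ) + (m : ℕ) < 2 * N := by
      have := i.isLt; have := m.isLt; omega
    have hmod : ((i : ℕ) + (m : ℕ)) % N = (i : ℕ) + (m : ℕ) - N := by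
      rw [Nat.mod_eq_sub_mod h, Nat.mod_eq_of_lt (by omega)]
    rw [hv, hmod]
    have hNR : ((N : ℝ)) ≠ 0 := by exact_mod_cast hN0.ne'
    have hcast : (((i : ℕ) + (m : ℕ) - N : ℕ) : ℝ) = ((i : ℕ) + (m : ℕ) : ℕ) - (N : ℝ) := by
      push_cast [Nat.cast_sub h]; ring
    rw [hcast]
    have harg : ((((i : ℕ) + (m : ℕ) : ℕ) : ℝ) - (N : ℝ)) * (L / N)
        = (((i : ℕ) + (m : ℕ) : ℕ) : ℝ) * (L / N) - L := by
      field_simp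
    rw [harg, ← coe_sub_period]

lemma dist_Z {L : ℝ} (hL : 0 < L) {N : ℕ} [NeZero N] (i m : Fin N) :
    dist ((((i : ℕ) : ℝ) * (L / (N : ℝ)) : ℝ) : AddCircle L)
        ((((((i + m : Fin N) : ℕ) : ℝ) * (L / (N : ℝ)) : ℝ) : AddCircle L))
      = ((min (m : ℕ) (N - (m : ℕ)) : ℕ) : ℝ) * L / N := by
  have hN0 : 0 < N := Nat.pos_of_ne_zero (NeZero.ne N)
  have hNR : (0 : ℝ) < N := by exact_mod_cast hN0
  have hLN0 : 0 < L / N := by positivity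
  rw [Z_add i m]
  have hab : ((i : ℕ) : ℝ) * (L / N) ≤ (((i : ℕ) + (m : ℕ) : ℕ) : ℝ) * (L / N) := by
    have : ((i : ℕ) : ℝ) ≤ (((i : ℕ) + (m : ℕ) : ℕ) : ℝ) := by exact_mod_cast Nat.le_add_right _ _
    nlinarith
  have hsub : (((i : ℕ) + (m : ℕ) : ℕ) : ℝ) * (L / N) - ((i : ℕ) : ℝ) * (L / N)
      = ((m : ℕ) : ℝ) * (L / N) := by push_cast; ring
  have hmN : ((m : ℕ) : ℝ) ≤ (N : ℝ) := by exact_mod_cast m.isLt.le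
  have hble : (((i : ℕ) + (m : ℕ) : ℕ) : ℝ) * (L / N) - ((i : ℕ) : ℝ) * (L / N) ≤ L := by
    rw [hsub]
    calc ((m : ℕ) : ℝ) * (L / N) ≤ (N : ℝ) * (L / N) := by nlinarith
      _ = L := by field_simp
  rw [dist_coe_eq_min hL hab hble, hsub]
  have hL' : L - ((m : ℕ) : ℝ) * (L / N) = ((N - (m : ℕ) : ℕ) : ℝ) * (L / N) := by
    rw [Nat.cast_sub m.isLt.le]; field_simp
  rw [hL']
  rcases le_total ((m : ℕ)) (N - (m : ℕ)) with h | h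
  · rw [min_eq_left h, min_eq_left (by exact_mod_cast (by nlinarith [hLN0, (Nat.cast_le (α := ℝ)).mpr h] : ((m:ℕ):ℝ) * (L/N) ≤ ((N - (m:ℕ) : ℕ):ℝ) * (L/N)))]
    ring
  · have hc : ((N - (m : ℕ) : ℕ) : ℝ) ≤ ((m : ℕ) : ℝ) := by exact_mod_cast h
    rw [min_eq_right h, min_eq_right (by nlinarith : ((N - (m:ℕ) : ℕ):ℝ) * (L/N) ≤ ((m:ℕ):ℝ) * (L/N))]
    ring

end ESUM

open ESUM

/-- **Uniqueness of minimizers for strictly convex kernels** (Proposition 1 (A), uniqueness part):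
if `f` is antitone and strictly convex on `[0, L/2]` and a configuration `x` has the same
geodesic `f`-energy as the equally spaced configuration `z_j = j·(L/N) mod L`, then `x` is
itself (up to relabelling) a translate of the equally spaced configuration. -/
theorem equally_spaced_unique_minimizer
    (L : ℝ) (hL : 0 < L) (N : ℕ) (hN : 2 ≤ N) (f : ℝ → ℝ)
    (hanti : AntitoneOn f (Set.Icc 0 (L / 2)))
    (hconv : StrictConvexOn ℝ (Set.Icc 0 (L / 2)) f)
    (x : Fin N → AddCircle L)
    (henergy : geodesicEnergy L f x
      = geodesicEnergy L f (fun j : Fin N => (((j : ℕ) : ℝ) * (L / N) : ℝ))) :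
    ∃ (c : AddCircle L) (σ : Equiv.Perm (Fin N)),
      ∀ j : Fin N, x (σ j) = c + (((j : ℕ) : ℝ) * (L / N) : ℝ) := by
  haveI : NeZero N := ⟨by omega⟩
  haveI : Fact (0 < L) := ⟨hL⟩
  have hN0 : 0 < N := by omega
  have hNR : (0 : ℝ) < N := by exact_mod_cast hN0
  classical
  -- representatives in [0, L)
  set r : Fin N → ℝ := fun i => ((AddCircle.equivIco L 0 (x i)) : ℝ) with hr
  have hr_mem : ∀ i, r i ∈ Set.Ico (0 : ℝ) L := by
    intro i
    have h2 := (AddCircle.equivIco L 0 (x i)).2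
    simpa using h2
  have hr_coe : ∀ i, ((r i : ℝ) : AddCircle L) = x i := by
    intro i
    exact (AddCircle.equivIco L 0).symm_apply_apply (x i)
  set τ : Equiv.Perm (Fin N) := Tuple.sort r with hτ
  set y : Fin N → ℝ := r ∘ τ with hy
  have hy_mono : Monotone y := Tuple.monotone_sort r
  have hy_mem : ∀ i, y i ∈ Set.Ico (0 : ℝ) L := fun i => hr_mem (τ i)
  set w : Fin N → AddCircle L := fun i => ((y i : ℝ) : AddCircle L) with hw
  have hxw : ∀ i, x (τ i) = w i := fun i => (hr_coe (τ i)).symm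
  set d : Fin N → ℝ := fun i => dist (w i) (w (i + 1)) with hd
  -- gap function via an ℕ-indexed version of y
  set Y : ℕ → ℝ := fun n => if h : n < N then y ⟨n, h⟩ else y 0 + L with hY
  have hmk0 : ∀ h : 0 < N, (⟨0, h⟩ : Fin N) = 0 := fun h => Fin.ext (by simp)
  have hY0 : Y 0 = y 0 := by
    rw [hY]
    simp only [dif_pos hN0, hmk0]
  have hYN : Y N = y 0 + L := by simp [hY]
  have hYsum : ∑ n ∈ Finset.range N, (Y (n + 1) - Y n) = L := by
    rw [Finset.sum_range_sub, hYN, hY0]; ring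
  have hone_lt : 1 < N := by omega
  have hval_one : ((1 : Fin N) : ℕ) = 1 := by
    simp [Fin.val_one', Nat.mod_eq_of_lt hone_lt]
  have hd_le_gap : ∀ i : Fin N, d i ≤ Y ((i : ℕ) + 1) - Y (i : ℕ) := by
    intro i
    have hYi : Y (i : ℕ) = y i := by simp [hY, i.isLt]
    rcases Nat.lt_or_ge ((i : ℕ) + 1) N with h | h
    · -- interior gap
      have hip : ((i + 1 : Fin N) : ℕ) = (i : ℕ) + 1 := by
        rw [Fin.val_add, hval_one, Nat.mod_eq_of_lt h]
      have hi1 : (i + 1 : Fin N) = ⟨(i : ℕ) + 1, h⟩ := by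
        apply Fin.ext; rw [hip]
      have hle : y i ≤ y (i + 1) := by
        apply hy_mono
        rw [Fin.le_def, hip]; omega
      have : d i ≤ |y i - y (i + 1)| := dist_coe_le_abs L _ _
      rw [abs_of_nonpos (by linarith)] at this
      have hYi1 : Y ((i : ℕ) + 1) = y (i + 1) := by
        simp only [hY, dif_pos h, hi1]
      rw [hYi1, hYi]; linarith
    · -- wrap-around gap
      have hiN : (i : ℕ) + 1 = N := by have := i.isLt; omega
      have hi1 : (i + 1 : Fin N) = 0 := by
        apply Fin.ext
        rw [Fin.val_add, hval_one, hiN, Nat.mod_self, Fin.val_zero]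
      have hYi1 : Y ((i : ℕ) + 1) = y 0 + L := by
        rw [hiN, hYN]
      have hcoe : w (i + 1) = ((y 0 + L : ℝ) : AddCircle L) := by
        rw [hi1, hw]
        simp [AddCircle.coe_add_period]
      have hdist : d i ≤ |y i - (y 0 + L)| := by
        rw [hd]
        simp only [hw]
        rw [hi1]
        have := dist_coe_le_abs L (y i) (y 0 + L)
        rwa [AddCircle.coe_add_period] at this
      have h0 : 0 ≤ y 0 := (hy_mem 0).1
      have hiL : y i < L := (hy_mem i).2
      rw [abs_of_nonpos (by linarith)] at hdist
      rw [hYi1, hYi]; linarith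
  have hdsum : ∑ i, d i ≤ L := by
    calc ∑ i, d i ≤ ∑ i : Fin N, (Y ((i : ℕ) + 1) - Y (i : ℕ)) :=
          Finset.sum_le_sum fun i _ => hd_le_gap i
      _ = ∑ n ∈ Finset.range N, (Y (n + 1) - Y n) :=
          Fin.sum_univ_eq_sum_range (fun n => Y (n + 1) - Y n) N
      _ = L := hYsum
  -- energy of x written via w
  set Z : Fin N → AddCircle L := fun j => ((((j : ℕ) : ℝ) * (L / (N : ℝ)) : ℝ) : AddCircle L)
    with hZ
  have hEx : geodesicEnergy L f x
      = ∑ m : Fin N, if m ≠ 0 then (∑ i : Fin N, f (dist (w i) (w (i + m)))) else 0 := by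
    have h1 : geodesicEnergy L f x
        = ∑ j : Fin N, ∑ k : Fin N, if j ≠ k then f (dist (w j) (w k)) else 0 := by
      unfold geodesicEnergy
      rw [← Equiv.sum_comp τ (fun j => ∑ k : Fin N, if j ≠ k then f (dist (x j) (x k)) else 0)]
      refine Finset.sum_congr rfl fun j _ => ?_
      rw [← Equiv.sum_comp τ (fun k => if τ j ≠ k then f (dist (x (τ j)) (x k)) else 0)]
      refine Finset.sum_congr rfl fun k _ => ?_
      rw [hxw, hxw]
      congr 1
      simp [EmbeddingLike.apply_eq_iff_eq]
    rw [h1, sum_pairs]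
  have hEz : geodesicEnergy L f Z
      = ∑ m : Fin N, if m ≠ 0
          then (N : ℝ) * f (((min (m : ℕ) (N - (m : ℕ)) : ℕ) : ℝ) * L / N) else 0 := by
    unfold geodesicEnergy
    rw [sum_pairs]
    refine Finset.sum_congr rfl fun m _ => ?_
    by_cases hm : m = 0
    · simp [hm]
    · rw [if_pos hm, if_pos hm]
      have : ∀ i : Fin N, f (dist (Z i) (Z (i + m)))
          = f (((min (m : ℕ) (N - (m : ℕ)) : ℕ) : ℝ) * L / N) := by
        intro i
        rw [hZ]
        congr 1
        exact dist_Z hL i m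
      rw [Finset.sum_congr rfl fun i _ => this i]
      rw [Finset.sum_const, Finset.card_univ, Fintype.card_fin, nsmul_eq_mul]
  -- lower bound for each chord class
  have hlb : ∀ m : Fin N, m ≠ 0 →
      (N : ℝ) * f (((min (m : ℕ) (N - (m : ℕ)) : ℕ) : ℝ) * L / N)
        ≤ ∑ i : Fin N, f (dist (w i) (w (i + m))) := by
    intro m hm
    have hmv : 1 ≤ (m : ℕ) := by
      rcases Nat.eq_zero_or_pos (m : ℕ) with h | h
      · exact absurd (Fin.ext (by simp [h]) : m = 0) hm
      · exact h
    have hmN : (m : ℕ) < N := m.isLt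
    rcases le_or_gt (2 * (m : ℕ)) N with h2 | h2
    · -- short direction is m itself
      have hmin : min (m : ℕ) (N - (m : ℕ)) = (m : ℕ) := by omega
      have := class_lb hL hanti hconv w hdsum hmv h2
      rw [Fin.cast_val_eq_self m] at this
      rw [hmin]
      exact this
    · -- short direction is N - m
      set k : ℕ := N - (m : ℕ) with hk
      have hk1 : 1 ≤ k := by omega
      have hk2 : 2 * k ≤ N := by omega
      have hmin : min (m : ℕ) (N - (m : ℕ)) = k := by omega
      have hkm : (k : Fin N) = -m := by
        have hsum : ((m : ℕ) : Fin N) + (k : Fin N) = ((((m : ℕ) + k : ℕ)) : Fin N) := by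
          push_cast; ring
        have hNk : ((m : ℕ)) + k = N := by omega
        have : ((m : ℕ) : Fin N) + (k : Fin N) = 0 := by
          rw [hsum, hNk, Fin.natCast_self]
        rw [Fin.cast_val_eq_self m] at this
        exact eq_neg_of_add_eq_zero_right this
      have hflip : ∑ i : Fin N, f (dist (w i) (w (i + (k : Fin N))))
          = ∑ i : Fin N, f (dist (w i) (w (i + m))) := by
        rw [hkm]
        have := sum_shift N (fun i => f (dist (w i) (w (i + -m)))) m
        rw [← this]
        refine Finset.sum_congr rfl fun i _ => ?_
        have : i + m + -m = i := by ring
        rw [this, dist_comm]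
      have := class_lb hL hanti hconv w hdsum hk1 hk2
      rw [hflip] at this
      rw [hmin]
      exact this
  -- equality of sums forces termwise equality
  have hB_le : ∀ m : Fin N, m ∈ Finset.univ →
      (if m ≠ 0 then (N : ℝ) * f (((min (m : ℕ) (N - (m : ℕ)) : ℕ) : ℝ) * L / N) else 0)
        ≤ (if m ≠ 0 then (∑ i : Fin N, f (dist (w i) (w (i + m)))) else 0) := by
    intro m _
    by_cases hm : m = 0
    · simp [hm]
    · rw [if_pos hm, if_pos hm]; exact hlb m hm
  have hsum_eq : ∑ m : Fin N, (if m ≠ 0 then (∑ i : Fin N, f (dist (w i) (w (i + m)))) else 0)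
      = ∑ m : Fin N, (if m ≠ 0
          then (N : ℝ) * f (((min (m : ℕ) (N - (m : ℕ)) : ℕ) : ℝ) * L / N) else 0) := by
    rw [← hEx, ← hEz, henergy]
  have hterm := (Finset.sum_eq_sum_iff_of_le hB_le).mp hsum_eq.symm
  -- use the m = 1 class
  have h1ne : (1 : Fin N) ≠ 0 := by
    intro h
    have := congrArg Fin.val h
    rw [hval_one, Fin.val_zero] at this
    omega
  have h1term := hterm 1 (Finset.mem_univ 1)
  rw [if_pos h1ne, if_pos h1ne] at h1term
  have hmin1 : min ((1 : Fin N) : ℕ) (N - ((1 : Fin N) : ℕ)) = 1 := by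
    rw [hval_one]; omega
  rw [hmin1] at h1term
  have hfd : ∑ i : Fin N, f (d i) ≤ (N : ℝ) * f (L / N) := by
    simp only [hd]
    rw [← h1term]
    norm_num
  have hdmem : ∀ i, d i ∈ Set.Icc 0 (L / 2) := fun i => ⟨dist_nonneg, dist_le_half hL _ _⟩
  have hdall : ∀ i, d i = L / N := eq_case hL hN hanti hconv d hdmem hdsum hfd
  -- gaps are all equal to L/N
  have hgap : ∀ i : Fin N, Y ((i : ℕ) + 1) - Y (i : ℕ) = L / N := by
    have hzero : ∑ i : Fin N, (Y ((i : ℕ) + 1) - Y (i : ℕ) - d i) = 0 := by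
      have hsd : ∑ i : Fin N, d i = N * (L / N) := by
        rw [Finset.sum_congr rfl fun i _ => hdall i]
        rw [Finset.sum_const, Finset.card_univ, Fintype.card_fin, nsmul_eq_mul]
      have hsg : ∑ i : Fin N, (Y ((i : ℕ) + 1) - Y (i : ℕ)) = L := by
        rw [Fin.sum_univ_eq_sum_range (fun n => Y (n + 1) - Y n) N]
        exact hYsum
      rw [Finset.sum_sub_distrib, hsg, hsd]
      field_simp; ring
    have hnn : ∀ i : Fin N, i ∈ Finset.univ → 0 ≤ Y ((i : ℕ) + 1) - Y (i : ℕ) - d i :=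
      fun i _ => by linarith [hd_le_gap i]
    have := (Finset.sum_eq_zero_iff_of_nonneg hnn).mp hzero
    intro i
    have hi := this i (Finset.mem_univ i)
    have := hdall i
    linarith
  -- y is an arithmetic progression
  have hyn : ∀ n (h : n < N), y ⟨n, h⟩ = y 0 + n * (L / N) := by
    intro n
    induction n with
    | zero => intro h; rw [hmk0 h]; simp
    | succ n ih =>
        intro h
        have hn : n < N := by omega
        have hgapn := hgap ⟨n, hn⟩
        have hYn : Y n = y ⟨n, hn⟩ := by simp [hY, hn]
        have hYn1 : Y (n + 1) = y ⟨n + 1, h⟩ := by simp [hY, h]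
        rw [hYn, hYn1] at hgapn
        rw [ih hn] at hgapn
        push_cast
        linarith
  -- conclusion
  refine ⟨((y 0 : ℝ) : AddCircle L), τ, fun j => ?_⟩
  rw [hxw j]
  have hyj : y j = y 0 + (j : ℕ) * (L / N) := by
    have := hyn (j : ℕ) j.isLt
    simpa using this
  rw [hw]
  simp only
  rw [hyj, AddCircle.coe_add]
end

section
/- Let L > 0 and N = 2M + κ ≥ 2 with κ ∈ {0,1}. Let f : ℝ → ℝ be antitone and concave on [0, L/2]. Then for every configuration x_1, …, x_N of points of ℝ/Lℤ, Σ_{j≠k} f(dist(x_j, x_k)) ≥ (N(N−1) − 2M(M+κ))·f(0) + 2M(M+κ)·f(L/2), and this lower bound is attained by any antipodal configuration consisting of M+κ copies of a point p and M copies of a point q with dist(p,q) = L/2. -/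
open Finset

open MeasureTheory

lemma norm_coe_min {L : ℝ} (hL : 0 < L) {c : ℝ} (h1 : -L < c) (h2 : c < L) :
    ‖(c : AddCircle L)‖ = min |c| (L - |c|) := by
  rw [AddCircle.norm_eq]
  have hL' : (0:ℝ) < L⁻¹ := by positivity
  have e1 : L⁻¹ * L = 1 := inv_mul_cancel₀ (ne_of_gt hL)
  have hu : L⁻¹ * c < 1 := by nlinarith
  have hl : -1 < L⁻¹ * c := by nlinarith
  rcases le_or_gt (L/2) c with h | h
  · have hm : 1/2 ≤ L⁻¹ * c := by nlinarith
    have hr : round (L⁻¹ * c) = 1 := by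
      rw [round_eq]
      apply Int.floor_eq_iff.mpr
      refine ⟨by push_cast; linarith, by push_cast; linarith⟩
    rw [hr, Int.cast_one, one_mul]
    have hc : 0 ≤ c := by linarith
    rw [abs_of_nonneg hc, abs_of_nonpos (by linarith), min_eq_right (by linarith)]
    ring
  rcases lt_or_ge c (-(L/2)) with h' | h'
  · have hm : L⁻¹ * c < -(1/2) := by nlinarith
    have hr : round (L⁻¹ * c) = -1 := by
      rw [round_eq]
      apply Int.floor_eq_iff.mpr
      refine ⟨by push_cast; linarith, by push_cast; linarith⟩
    rw [hr, Int.cast_neg, Int.cast_one, neg_one_mul, sub_neg_eq_add]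
    have hc : c ≤ 0 := by linarith
    rw [abs_of_nonpos hc, abs_of_nonneg (by linarith), min_eq_right (by linarith)]
    ring
  · have hm1 : -(1/2) ≤ L⁻¹ * c := by nlinarith
    have hm2 : L⁻¹ * c < 1/2 := by nlinarith
    have hr : round (L⁻¹ * c) = 0 := round_eq_zero_iff.mpr ⟨hm1, hm2⟩
    rw [hr, Int.cast_zero, zero_mul, sub_zero, min_eq_left]
    rcases abs_cases c with ⟨e, _⟩ | ⟨e, _⟩ <;> rw [e] <;> linarith

lemma addCircle_norm_le_half {L : ℝ} (hL : 0 < L) (z : AddCircle L) : ‖z‖ ≤ L / 2 := by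
  induction z using QuotientAddGroup.induction_on with
  | H c =>
    rw [AddCircle.norm_eq]
    have := abs_sub_round (L⁻¹ * c)
    have e0 : (L⁻¹ * c) * L = c := by field_simp
    have e : c - round (L⁻¹ * c) * L = (L⁻¹ * c - round (L⁻¹ * c)) * L := by
      rw [sub_mul, e0]
    rw [e, abs_mul, abs_of_pos hL]
    nlinarith [abs_nonneg (L⁻¹ * c - round (L⁻¹ * c))]

lemma addCircle_dist_le_half {L : ℝ} (hL : 0 < L) (x y : AddCircle L) : dist x y ≤ L / 2 := by
  rw [dist_eq_norm]; exact addCircle_norm_le_half hL _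

lemma dist_coe_min {L : ℝ} (hL : 0 < L) {a b : ℝ} (ha : a ∈ Set.Ico (0:ℝ) L)
    (hb : b ∈ Set.Ico (0:ℝ) L) :
    dist (a : AddCircle L) (b : AddCircle L) = min |a - b| (L - |a - b|) := by
  rw [dist_eq_norm, ← AddCircle.coe_sub]
  exact norm_coe_min hL (by cases ha; cases hb; linarith) (by cases ha; cases hb; linarith)

/-- The half-circle arc starting at `a`, as a subset of the fundamental domain `[0, L)`. -/
noncomputable def Sarc (L a : ℝ) : Set ℝ :=
  if a + L/2 ≤ L then Set.Ico a (a + L/2) else Set.Ico a L ∪ Set.Ico 0 (a - L/2)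

lemma measurableSet_Sarc (L a : ℝ) : MeasurableSet (Sarc L a) := by
  unfold Sarc; split_ifs
  · exact measurableSet_Ico
  · exact measurableSet_Ico.union measurableSet_Ico

lemma Sarc_subset {L a : ℝ} (hL : 0 < L) (ha : a ∈ Set.Ico (0:ℝ) L) :
    Sarc L a ⊆ Set.Ico 0 L := by
  obtain ⟨ha0, haL⟩ := ha
  unfold Sarc; split_ifs with h
  · exact fun t ht => ⟨le_trans ha0 ht.1, lt_of_lt_of_le ht.2 h⟩
  · rintro t (ht | ht)
    · exact ⟨le_trans ha0 ht.1, ht.2⟩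
    · exact ⟨ht.1, lt_of_lt_of_le ht.2 (by linarith)⟩

lemma vol_inter_Sarc {L a b : ℝ} (hL : 0 < L) (ha : a ∈ Set.Ico (0:ℝ) L)
    (hb : b ∈ Set.Ico (0:ℝ) L) (hab : a ≤ b) :
    (volume (Sarc L a ∩ Sarc L b)).toReal = L/2 - min (b - a) (L - (b - a)) := by
  obtain ⟨ha0, haL⟩ := ha
  obtain ⟨hb0, hbL⟩ := hb
  have hc : (0:ℝ) < L/2 := by linarith
  unfold Sarc
  rcases le_or_gt (b + L/2) L with hbc | hbc
  · -- both arcs don't wrap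
    have hac : a + L/2 ≤ L := by linarith
    rw [if_pos hac, if_pos hbc, Set.Ico_inter_Ico, sup_eq_right.2 hab,
      inf_eq_left.2 (by linarith), Real.volume_Ico,
      ENNReal.toReal_ofReal (by linarith), min_eq_left (by linarith)]
    ring
  rcases le_or_gt (a + L/2) L with hac | hac
  · -- only the second arc wraps
    rw [if_pos hac, if_neg (not_le.2 hbc), Set.inter_union_distrib_left,
      Set.Ico_inter_Ico, Set.Ico_inter_Ico, sup_eq_right.2 hab, sup_eq_left.2 ha0,
      (inf_eq_left.2 (by linarith : a + L/2 ≤ L) : (a + L/2) ⊓ L = a + L/2)]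
    rcases le_or_gt (b - a) (L/2) with hd | hd
    · rw [(min_eq_left (by linarith) : min (b-a) (L - (b-a)) = b - a),
        Set.Ico_eq_empty (not_lt.2 (inf_le_of_right_le (by linarith : b - L/2 ≤ a))), Set.union_empty,
        Real.volume_Ico, ENNReal.toReal_ofReal (by linarith)]
      ring
    · rw [(min_eq_right (by linarith) : min (b-a) (L - (b-a)) = L - (b-a)),
        inf_eq_right.2 (by linarith : b - L/2 ≤ a + L/2),
        Set.Ico_eq_empty (by push_neg; linarith : ¬ b < a + L/2), Set.empty_union,
        Real.volume_Ico, ENNReal.toReal_ofReal (by linarith)]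
      ring
  · -- both arcs wrap
    have hd : b - a < L/2 := by linarith
    have h2 : ¬ (a ⊔ 0) < (L ⊓ (b - L/2)) :=
      not_lt.2 (le_trans inf_le_right (le_trans (by linarith : b - L/2 ≤ a) le_sup_left))
    have h3 : ¬ (0 ⊔ b) < ((a - L/2) ⊓ L) :=
      not_lt.2 (le_trans inf_le_left (le_trans (by linarith : a - L/2 ≤ b) le_sup_right))
    rw [if_neg (not_le.2 hac), if_neg (not_le.2 hbc), Set.union_inter_distrib_right,
      Set.inter_union_distrib_left, Set.inter_union_distrib_left,
      Set.Ico_inter_Ico, Set.Ico_inter_Ico, Set.Ico_inter_Ico, Set.Ico_inter_Ico,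
      Set.Ico_eq_empty h2, Set.union_empty, Set.Ico_eq_empty h3, Set.empty_union,
      sup_eq_right.2 hab, inf_idem, sup_idem,
      inf_eq_left.2 (by linarith : a - L/2 ≤ b - L/2)]
    rw [measure_union ?_ measurableSet_Ico, Real.volume_Ico, Real.volume_Ico,
      ENNReal.toReal_add (by simp) (by simp),
      ENNReal.toReal_ofReal (by linarith), ENNReal.toReal_ofReal (by linarith),
      min_eq_left (by linarith)]
    · ring
    · apply Set.disjoint_left.2
      rintro t ⟨htb, _⟩ ⟨_, ht2⟩
      linarith

lemma vol_inter_dist {L a b : ℝ} (hL : 0 < L) (ha : a ∈ Set.Ico (0:ℝ) L)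
    (hb : b ∈ Set.Ico (0:ℝ) L) :
    (volume (Sarc L a ∩ Sarc L b)).toReal = L/2 - dist (a : AddCircle L) (b : AddCircle L) := by
  rcases le_total a b with hab | hab
  · rw [vol_inter_Sarc hL ha hb hab, dist_coe_min hL ha hb,
      abs_sub_comm, abs_of_nonneg (by linarith)]
  · rw [Set.inter_comm, dist_comm, vol_inter_Sarc hL hb ha hab, dist_coe_min hL hb ha,
      abs_sub_comm, abs_of_nonneg (by linarith)]

lemma dist_sum_le {L : ℝ} (hL : 0 < L) {N M κ : ℕ} (hκ : κ = 0 ∨ κ = 1)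
    (hNM : N = 2 * M + κ) (x : Fin N → AddCircle L) :
    ∑ j : Fin N, ∑ k : Fin N, dist (x j) (x k) ≤ (M : ℝ) * ((M : ℝ) + (κ : ℝ)) * L := by
  classical
  haveI : Fact (0 < L) := ⟨hL⟩
  set a : Fin N → ℝ := fun j => ((AddCircle.equivIco L 0 (x j) : Set.Ico (0:ℝ) (0 + L)) : ℝ)
    with ha_def
  have hamem : ∀ j, a j ∈ Set.Ico (0:ℝ) L := by
    intro j
    simpa using (AddCircle.equivIco L 0 (x j)).2
  have hax : ∀ j, ((a j : ℝ) : AddCircle L) = x j := by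
    intro j
    exact (AddCircle.equivIco L 0).symm_apply_apply (x j)
  set S : Fin N → Set ℝ := fun j => Sarc L (a j) with hS_def
  have hSmeas : ∀ j, MeasurableSet (S j) := fun j => measurableSet_Sarc L (a j)
  set A : Set ℝ := Set.Ico (0:ℝ) L with hA_def
  have hA : MeasurableSet A := measurableSet_Ico
  have hAvol : volume A = ENNReal.ofReal L := by
    rw [hA_def, Real.volume_Ico, sub_zero]
  have hAfin : volume A < ⊤ := by rw [hAvol]; exact ENNReal.ofReal_lt_top
  have hIone : IntegrableOn (fun _ : ℝ => (1:ℝ)) A volume :=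
    integrableOn_const hAfin.ne
  have hInd : ∀ s : Set ℝ, MeasurableSet s → IntegrableOn (s.indicator fun _ => (1:ℝ)) A volume :=
    fun s hs => hIone.indicator hs
  have hIndInt : ∀ s : Set ℝ, MeasurableSet s → s ⊆ A →
      ∫ t in A, s.indicator (fun _ => (1:ℝ)) t = (volume s).toReal := by
    intro s hs hsub
    rw [MeasureTheory.setIntegral_indicator hs, Set.inter_eq_self_of_subset_right hsub,
      MeasureTheory.setIntegral_const, smul_eq_mul, mul_one, measureReal_def]
  set F : Fin N → ℝ → ℝ := fun j => (S j).indicator fun _ => (1:ℝ) with hF_def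
  have hprod : ∀ j k, (fun t => F j t * F k t) = (S j ∩ S k).indicator fun _ => (1:ℝ) := by
    intro j k
    funext t
    by_cases hj : t ∈ S j <;> by_cases hk : t ∈ S k <;>
      simp [hF_def, Set.indicator_apply, hj, hk, Set.mem_inter_iff]
  set h : ℝ → ℝ := fun t => ∑ j, F j t with hh_def
  have hIntF : ∀ j, IntegrableOn (F j) A volume := fun j => hInd _ (hSmeas j)
  have hInth : IntegrableOn h A volume := MeasureTheory.integrable_finset_sum _ fun j _ => hIntF j
  have hIntFF : ∀ j k, IntegrableOn (fun t => F j t * F k t) A volume := by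
    intro j k
    rw [hprod j k]
    exact hInd _ ((hSmeas j).inter (hSmeas k))
  have hInthh : IntegrableOn (fun t => h t * h t) A volume := by
    have : (fun t => h t * h t) = fun t => ∑ j, ∑ k, F j t * F k t := by
      funext t
      rw [hh_def, Finset.sum_mul_sum]
    rw [this]
    exact MeasureTheory.integrable_finset_sum _ fun j _ =>
      MeasureTheory.integrable_finset_sum _ fun k _ => hIntFF j k
  -- the second moment identity
  have hmoment : ∫ t in A, h t * h t =
      ∑ j : Fin N, ∑ k : Fin N, (volume (S j ∩ S k)).toReal := by
    have e1 : (fun t => h t * h t) = fun t => ∑ j, ∑ k, F j t * F k t := by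
      funext t
      rw [hh_def, Finset.sum_mul_sum]
    rw [e1, MeasureTheory.integral_finset_sum _ fun j _ =>
      MeasureTheory.integrable_finset_sum _ fun k _ => hIntFF j k]
    refine Finset.sum_congr rfl fun j _ => ?_
    rw [MeasureTheory.integral_finset_sum _ fun k _ => hIntFF j k]
    refine Finset.sum_congr rfl fun k _ => ?_
    rw [hprod j k]
    exact hIndInt _ ((hSmeas j).inter (hSmeas k))
      (Set.Subset.trans Set.inter_subset_left (Sarc_subset hL (hamem j)))
  -- first moment
  have hfirst : ∫ t in A, h t = (N : ℝ) * (L/2) := by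
    rw [hh_def, MeasureTheory.integral_finset_sum _ fun j _ => hIntF j]
    have : ∀ j : Fin N, ∫ t in A, F j t = L/2 := by
      intro j
      rw [hF_def]
      rw [hIndInt _ (hSmeas j) (Sarc_subset hL (hamem j))]
      have := vol_inter_dist hL (hamem j) (hamem j)
      rw [Set.inter_self, hax j, dist_self, sub_zero] at this
      exact this
    rw [Finset.sum_congr rfl fun j _ => this j, Finset.sum_const, Finset.card_univ,
      Fintype.card_fin, nsmul_eq_mul]
  -- pointwise quadratic bound
  have hpt : ∀ t : ℝ, (N:ℝ) * h t - (M:ℝ) * ((M:ℝ) + (κ:ℝ)) ≤ h t * h t := by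
    intro t
    have hcard : h t = ((Finset.univ.filter fun j => t ∈ S j).card : ℝ) := by
      rw [hh_def]
      simp only [hF_def, Set.indicator_apply]
      rw [Finset.sum_boole]
    set n := (Finset.univ.filter fun j => t ∈ S j).card with hn_def
    rw [hcard]
    have hκ0 : (0:ℝ) ≤ (κ:ℝ) := by positivity
    have hκ1 : (κ:ℝ) ≤ 1 := by rcases hκ with rfl | rfl <;> norm_num
    have hNr : (N:ℝ) = 2*(M:ℝ) + κ := by rw [hNM]; push_cast; ring
    rcases le_or_gt n M with hn | hn
    · have hn' : (n:ℝ) ≤ M := by exact_mod_cast hn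
      nlinarith [sq_nonneg ((M:ℝ) - n), mul_nonneg hκ0 (sub_nonneg.2 hn')]
    · have hn' : (M:ℝ) + 1 ≤ n := by exact_mod_cast hn
      nlinarith [mul_nonneg (by linarith : (0:ℝ) ≤ (n:ℝ) - M)
        (by linarith : (0:ℝ) ≤ (n:ℝ) - M - κ)]
  -- integrate the pointwise bound
  have hmono : ∫ t in A, ((N:ℝ) * h t - (M:ℝ) * ((M:ℝ) + (κ:ℝ))) ≤ ∫ t in A, h t * h t := by
    apply MeasureTheory.setIntegral_mono_on ?_ hInthh hA (fun t _ => hpt t)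
    exact (hInth.const_mul _).sub (integrableOn_const hAfin.ne)
  have hlhs : ∫ t in A, ((N:ℝ) * h t - (M:ℝ) * ((M:ℝ) + (κ:ℝ)))
      = (N:ℝ) * ((N:ℝ) * (L/2)) - (M:ℝ) * ((M:ℝ) + (κ:ℝ)) * L := by
    rw [MeasureTheory.integral_sub (hInth.const_mul _) (integrableOn_const hAfin.ne),
      MeasureTheory.integral_const_mul, hfirst, MeasureTheory.setIntegral_const, measureReal_def, hAvol,
      ENNReal.toReal_ofReal hL.le, smul_eq_mul]
    ring
  -- put everything together
  have hkey : ∑ j : Fin N, ∑ k : Fin N, (L/2 - dist (x j) (x k))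
      ≥ (N:ℝ) * ((N:ℝ) * (L/2)) - (M:ℝ) * ((M:ℝ) + (κ:ℝ)) * L := by
    have e : ∀ j k : Fin N, L/2 - dist (x j) (x k) = (volume (S j ∩ S k)).toReal := by
      intro j k
      rw [hS_def]
      have := vol_inter_dist hL (hamem j) (hamem k)
      rw [hax j, hax k] at this
      exact this.symm
    calc ∑ j : Fin N, ∑ k : Fin N, (L/2 - dist (x j) (x k))
        = ∑ j : Fin N, ∑ k : Fin N, (volume (S j ∩ S k)).toReal := by
          exact Finset.sum_congr rfl fun j _ => Finset.sum_congr rfl fun k _ => e j k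
      _ = ∫ t in A, h t * h t := hmoment.symm
      _ ≥ (N:ℝ) * ((N:ℝ) * (L/2)) - (M:ℝ) * ((M:ℝ) + (κ:ℝ)) * L := by
          rw [← hlhs]; exact hmono
  have expand : ∑ j : Fin N, ∑ k : Fin N, (L/2 - dist (x j) (x k))
      = (N:ℝ) * ((N:ℝ) * (L/2)) - ∑ j : Fin N, ∑ k : Fin N, dist (x j) (x k) := by
    simp only [Finset.sum_sub_distrib, Finset.sum_const, Finset.card_univ, Fintype.card_fin,
      nsmul_eq_mul]
    try ring
  linarith [hkey, expand]

lemma card_filter_val_lt {N m : ℕ} (hm : m ≤ N) :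
    ((Finset.univ : Finset (Fin N)).filter fun k : Fin N => (k:ℕ) < m).card = m := by
  classical
  have e : ((Finset.univ : Finset (Fin N)).filter fun k : Fin N => (k:ℕ) < m)
      = Finset.map (Fin.castLEEmb hm) Finset.univ := by
    ext k
    simp only [Finset.mem_filter, Finset.mem_univ, true_and, Finset.mem_map]
    constructor
    · intro hk
      refine ⟨⟨(k:ℕ), hk⟩, ?_⟩
      ext
      simp
    · rintro ⟨a, rfl⟩
      simp [a.2]
  rw [e, Finset.card_map, Finset.card_univ, Fintype.card_fin]

lemma chord_le {L : ℝ} {f : ℝ → ℝ} (hL : 0 < L)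
    (hconc : ConcaveOn ℝ (Set.Icc 0 (L / 2)) f) {t : ℝ} (ht0 : 0 ≤ t) (ht : t ≤ L/2) :
    f 0 + (f (L/2) - f 0) * (2/L) * t ≤ f t := by
  have hb0 : 0 ≤ (2/L) * t := by positivity
  have hb1 : (2/L) * t ≤ 1 := by
    rw [div_mul_eq_mul_div, div_le_one hL]
    linarith
  have key := hconc.2 (Set.mem_Icc.2 ⟨le_rfl, by linarith⟩)
    (Set.mem_Icc.2 ⟨by linarith, le_rfl⟩) (by linarith : (0:ℝ) ≤ 1 - (2/L) * t) hb0
    (by ring : (1 - (2/L) * t) + (2/L) * t = 1)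
  have harg : (1 - (2/L) * t) • (0:ℝ) + ((2/L) * t) • (L/2) = t := by
    rw [smul_eq_mul, smul_eq_mul, mul_zero, zero_add]
    field_simp
  rw [harg, smul_eq_mul, smul_eq_mul] at key
  nlinarith [key]

/-- **Optimality of antipodal configurations for concave kernels** (Proposition 1 (B)):
for `f` antitone and concave on `[0, L/2]` and `N = 2M + κ` (`κ ∈ {0,1}`), every `N`-point
configuration on `ℝ/Lℤ` has geodesic `f`-energy at least
`(N(N−1) − 2M(M+κ))·f(0) + 2M(M+κ)·f(L/2)`, and this bound is attained by any antipodal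
configuration consisting of `M+κ` copies of a point `p` and `M` copies of a point `q` with
`dist p q = L/2`. -/
theorem antipodal_minimize_geodesic_energy
    (L : ℝ) (hL : 0 < L) (N M κ : ℕ) (hκ : κ = 0 ∨ κ = 1) (hNM : N = 2 * M + κ)
    (hN : 2 ≤ N) (f : ℝ → ℝ)
    (hanti : AntitoneOn f (Set.Icc 0 (L / 2)))
    (hconc : ConcaveOn ℝ (Set.Icc 0 (L / 2)) f) :
    (∀ x : Fin N → AddCircle L,
      ((N : ℝ) * ((N : ℝ) - 1) - 2 * (M : ℝ) * ((M : ℝ) + (κ : ℝ))) * f 0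
          + 2 * (M : ℝ) * ((M : ℝ) + (κ : ℝ)) * f (L / 2)
        ≤ geodesicEnergy L f x) ∧
    (∀ p q : AddCircle L, dist p q = L / 2 →
      geodesicEnergy L f (fun j : Fin N => if (j : ℕ) < M + κ then p else q)
        = ((N : ℝ) * ((N : ℝ) - 1) - 2 * (M : ℝ) * ((M : ℝ) + (κ : ℝ))) * f 0
          + 2 * (M : ℝ) * ((M : ℝ) + (κ : ℝ)) * f (L / 2)) := by
  classical
  have hLhalf : (0:ℝ) < L/2 := by linarith
  have hκ1 : κ ≤ 1 := by rcases hκ with rfl | rfl <;> norm_num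
  have hM1 : 1 ≤ M := by omega
  have hNr : (N:ℝ) = 2*(M:ℝ) + (κ:ℝ) := by rw [hNM]; push_cast; ring
  have hf0 : f (L/2) ≤ f 0 :=
    hanti (Set.mem_Icc.2 ⟨le_rfl, hLhalf.le⟩) (Set.mem_Icc.2 ⟨hLhalf.le, le_rfl⟩) hLhalf.le
  constructor
  · -- lower bound for every configuration
    intro x
    set c' : ℝ := (f (L/2) - f 0) * (2/L) with hc'
    have hc'0 : c' ≤ 0 := mul_nonpos_of_nonpos_of_nonneg (by linarith) (by positivity)
    set D : ℝ := ∑ j : Fin N, ∑ k : Fin N, dist (x j) (x k) with hD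
    have hDle : D ≤ (M : ℝ) * ((M : ℝ) + (κ : ℝ)) * L := dist_sum_le hL hκ hNM x
    have step1 : ∑ j : Fin N, ∑ k : Fin N, (if j ≠ k then f 0 + c' * dist (x j) (x k) else 0)
        ≤ geodesicEnergy L f x := by
      unfold geodesicEnergy
      refine Finset.sum_le_sum fun j _ => Finset.sum_le_sum fun k _ => ?_
      by_cases hjk : j = k
      · simp [hjk]
      · rw [if_pos hjk, if_pos hjk]
        have h2 : dist (x j) (x k) ≤ L/2 := addCircle_dist_le_half hL _ _
        have := chord_le hL hconc dist_nonneg h2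
        rw [hc']
        linarith [this]
    have step2 : ∑ j : Fin N, ∑ k : Fin N, (if j ≠ k then f 0 + c' * dist (x j) (x k) else 0)
        = (N:ℝ)*(N:ℝ)*f 0 - (N:ℝ)*f 0 + c' * D := by
      have e : ∀ j k : Fin N, (if j ≠ k then f 0 + c' * dist (x j) (x k) else 0)
          = (f 0 + c' * dist (x j) (x k)) - (if j = k then f 0 else 0) := by
        intro j k
        by_cases hjk : j = k
        · subst hjk; simp [dist_self]
        · simp [hjk]
      rw [Finset.sum_congr rfl fun j _ => Finset.sum_congr rfl fun k _ => e j k]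
      have e2 : ∀ j : Fin N, ∑ k : Fin N, (if j = k then f 0 else 0) = f 0 := by
        intro j
        rw [Finset.sum_ite_eq]
        simp
      simp only [Finset.sum_sub_distrib, Finset.sum_add_distrib, Finset.sum_const,
        Finset.card_univ, Fintype.card_fin, nsmul_eq_mul, ← Finset.mul_sum,
        Finset.sum_congr rfl fun j _ => e2 j]
      rw [hD]
      ring
    have h3 : c' * ((M:ℝ)*((M:ℝ)+(κ:ℝ))*L) ≤ c' * D := mul_le_mul_of_nonpos_left hDle hc'0
    have h4 : c' * ((M:ℝ)*((M:ℝ)+(κ:ℝ))*L)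
        = 2*(M:ℝ)*((M:ℝ)+(κ:ℝ))*(f (L/2) - f 0) := by
      rw [hc']
      field_simp
    nlinarith [step1, step2, h3, h4]
  · -- the antipodal configuration attains the bound
    intro p q hpq
    have hqp : dist q p = L/2 := by rw [dist_comm]; exact hpq
    have hm : M + κ ≤ N := by omega
    set y : Fin N → AddCircle L := fun j => if (j : ℕ) < M + κ then p else q with hy
    have cardA : ((Finset.univ : Finset (Fin N)).filter fun k : Fin N => (k:ℕ) < M + κ).card
        = M + κ := card_filter_val_lt hm
    have cardB : ((Finset.univ : Finset (Fin N)).filter fun k : Fin N => ¬ (k:ℕ) < M + κ).card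
        = M := by
      have h1 := Finset.card_filter_add_card_filter_not
        (s := (Finset.univ : Finset (Fin N))) (p := fun k : Fin N => (k:ℕ) < M + κ)
      have h2 : (Finset.univ : Finset (Fin N)).card = N := by simp
      omega
    have inner : ∀ z : AddCircle L, ∑ k : Fin N, f (dist z (y k))
        = ((M:ℝ)+(κ:ℝ)) * f (dist z p) + (M:ℝ) * f (dist z q) := by
      intro z
      have e : ∀ k : Fin N, f (dist z (y k))
          = if (k:ℕ) < M + κ then f (dist z p) else f (dist z q) := by
        intro k
        by_cases hk : (k:ℕ) < M + κ <;> simp [hy, hk]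
      rw [Finset.sum_congr rfl fun k _ => e k, Finset.sum_ite, Finset.sum_const,
        Finset.sum_const, cardA, cardB, nsmul_eq_mul, nsmul_eq_mul]
      push_cast
      ring
    have eouter : ∀ j : Fin N, ∑ k : Fin N, f (dist (y j) (y k))
        = if (j:ℕ) < M + κ
          then ((M:ℝ)+(κ:ℝ)) * f (dist p p) + (M:ℝ) * f (dist p q)
          else ((M:ℝ)+(κ:ℝ)) * f (dist q p) + (M:ℝ) * f (dist q q) := by
      intro j
      by_cases hj : (j:ℕ) < M + κ
      · rw [if_pos hj]
        have hyj : y j = p := by simp [hy, hj]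
        rw [hyj]
        exact inner p
      · rw [if_neg hj]
        have hyj : y j = q := by simp [hy, hj]
        rw [hyj]
        exact inner q
    have ediag : ∀ j k : Fin N, (if j ≠ k then f (dist (y j) (y k)) else 0)
        = f (dist (y j) (y k)) - (if j = k then f 0 else 0) := by
      intro j k
      by_cases hjk : j = k
      · subst hjk; simp [dist_self]
      · simp [hjk]
    have e2 : ∀ j : Fin N, ∑ k : Fin N, (if j = k then f 0 else 0) = f 0 := by
      intro j
      rw [Finset.sum_ite_eq]
      simp
    unfold geodesicEnergy
    rw [Finset.sum_congr rfl fun j _ => Finset.sum_congr rfl fun k _ => ediag j k]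
    simp only [Finset.sum_sub_distrib]
    rw [Finset.sum_congr rfl fun j _ => eouter j,
      Finset.sum_congr rfl fun j _ => e2 j, Finset.sum_ite, Finset.sum_const,
      Finset.sum_const, cardA, cardB, Finset.sum_const, Finset.card_univ, Fintype.card_fin,
      dist_self, dist_self, hpq, hqp]
    simp only [nsmul_eq_mul]
    push_cast
    linear_combination (-(f 0)) * ((N:ℝ) + 2*(M:ℝ) + (κ:ℝ)) * hNr
end

section
/- Let L > 0, let p ≥ 1 be an integer, and let N = 2M + κ ≥ 2 with κ ∈ {0,1}. Then the geodesic Riesz (−p)-energy of the N equally spaced points z_j = j·(L/N) mod L on ℝ/Lℤ satisfies the exact identity Σ_{j≠k} dist(z_j,z_k)^p = [(L/2)^p/(p+1)]·N² + [(L/2)^p/(p+1)]·Σ_{n=1}^{⌊p/2⌋} C(p+1, 2n)·B_{2n}(κ/2)·2^{2n}·N^{2−2n} + [2L^p/(p+1)]·(B_{p+1}(κ/2) − B_{p+1})·N^{1−p}, and the last term vanishes when p is even. -/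
open Finset

section MyAux
open Polynomial

lemma my_bernoulli_comp_one_sub (n : ℕ) :
    (Polynomial.bernoulli n).comp (1 - X) = (-1 : ℚ)^n • Polynomial.bernoulli n := by
  induction n with
  | zero => simp [Polynomial.bernoulli]
  | succ n ih =>
    set f : ℚ[X] := (Polynomial.bernoulli (n+1)).comp (1 - X)
        - (-1 : ℚ)^(n+1) • Polynomial.bernoulli (n+1) with hf
    have hd : derivative f = 0 := by
      rw [hf, derivative_sub, derivative_comp, derivative_smul,
        Polynomial.derivative_bernoulli (n+1)]
      simp only [Nat.add_sub_cancel, derivative_sub, derivative_one, derivative_X, zero_sub,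
        mul_comp, natCast_comp]
      rw [ih]
      simp only [smul_eq_C_mul, C_neg, map_pow, map_neg, map_one]
      push_cast
      ring
    have h0 : f = C (f.coeff 0) :=
      eq_C_of_natDegree_eq_zero (natDegree_eq_zero_of_derivative_eq_zero hd)
    have he : f.eval 0 = 0 := by
      rw [hf]
      simp only [eval_sub, eval_comp, eval_sub, eval_one, eval_X, sub_zero, eval_smul,
        smul_eq_mul]
      rw [Polynomial.bernoulli_eval_one, Polynomial.bernoulli_eval_zero,
        show _root_.bernoulli (n+1) = (-1 : ℚ)^(n+1) * bernoulli' (n+1) from rfl]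
      have hsq : ((-1 : ℚ)^(n+1)) * ((-1 : ℚ)^(n+1)) = 1 := by
        rw [← pow_add]
        exact Even.neg_one_pow ⟨n+1, by ring⟩
      rw [← mul_assoc, hsq, one_mul, sub_self]
    have hzero : f = 0 := by
      rw [h0, Polynomial.coeff_zero_eq_eval_zero, he, map_zero]
    exact sub_eq_zero.mp hzero

lemma my_bernoulli_eval_one_sub (n : ℕ) (x : ℚ) :
    (Polynomial.bernoulli n).eval (1 - x) = (-1 : ℚ)^n * (Polynomial.bernoulli n).eval x := by
  have := congrArg (Polynomial.eval x) (my_bernoulli_comp_one_sub n)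
  simpa [eval_comp] using this

lemma my_bernoulli_eval_half_odd {n : ℕ} (hn : Odd n) :
    (Polynomial.bernoulli n).eval (1/2 : ℚ) = 0 := by
  have h := my_bernoulli_eval_one_sub n (1/2)
  rw [hn.neg_one_pow] at h
  norm_num at h
  linarith

lemma my_bernoulli_odd_zero {n : ℕ} (hn : Odd n) (h1 : 1 < n) : _root_.bernoulli n = 0 := by
  rw [bernoulli_eq_bernoulli'_of_ne_one (by omega), bernoulli'_eq_zero_of_odd hn h1]

lemma my_bernoulli_eval_def (k : ℕ) (x : ℚ) :
    (Polynomial.bernoulli k).eval x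
      = ∑ i ∈ range (k+1), _root_.bernoulli i * (k.choose i : ℚ) * x^(k-i) := by
  rw [Polynomial.bernoulli, eval_finset_sum]
  simp [eval_monomial]

lemma my_bernoulli_eval_add (n : ℕ) (x y : ℚ) :
    (Polynomial.bernoulli n).eval (x + y)
      = ∑ k ∈ range (n+1), (n.choose k : ℚ) * (Polynomial.bernoulli k).eval x * y^(n-k) := by
  rw [my_bernoulli_eval_def]
  have hL : ∀ i ∈ range (n+1),
      _root_.bernoulli i * (n.choose i : ℚ) * (x+y)^(n-i)
        = ∑ k ∈ Ico i (n+1), _root_.bernoulli i * (n.choose k : ℚ) * (k.choose i : ℚ)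
            * x^(k-i) * y^(n-k) := by
    intro i hi
    rw [mem_range] at hi
    have hi' : i ≤ n := by omega
    rw [add_pow, Finset.mul_sum, Finset.sum_Ico_eq_sum_range]
    have hr : n + 1 - i = n - i + 1 := by omega
    rw [hr]
    refine sum_congr rfl fun j hj => ?_
    rw [mem_range] at hj
    have hj' : j ≤ n - i := by omega
    have hc : (n.choose (i+j) : ℚ) * ((i+j).choose i : ℚ)
        = (n.choose i : ℚ) * ((n-i).choose j : ℚ) := by
      have := Nat.choose_mul (n := n) (show i ≤ i + j by omega)
      have h2 : i + j - i = j := by omega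
      rw [h2] at this
      exact_mod_cast congrArg (Nat.cast : ℕ → ℚ) this
    have h3 : i + j - i = j := by omega
    have h4 : n - (i + j) = n - i - j := by omega
    rw [h3, h4]
    calc _root_.bernoulli i * (n.choose i : ℚ) * (x ^ j * y ^ (n - i - j) * ((n-i).choose j : ℚ))
        = _root_.bernoulli i * ((n.choose i : ℚ) * ((n-i).choose j : ℚ)) * x ^ j * y ^ (n-i-j) := by
          ring
      _ = _root_.bernoulli i * ((n.choose (i+j) : ℚ) * ((i+j).choose i : ℚ)) * x ^ j
            * y ^ (n-i-j) := by rw [hc]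
      _ = _root_.bernoulli i * (n.choose (i+j) : ℚ) * ((i+j).choose i : ℚ) * x ^ j
            * y ^ (n-i-j) := by ring
  rw [sum_congr rfl hL, range_eq_Ico, Finset.sum_Ico_Ico_comm]
  refine sum_congr rfl fun k hk => ?_
  rw [my_bernoulli_eval_def, Finset.mul_sum, Finset.sum_mul, range_eq_Ico]
  refine sum_congr rfl fun i hi => ?_
  ring

lemma my_sum_even_split (m : ℕ) (g : ℕ → ℚ) (hodd : ∀ k, Odd k → g k = 0) :
    ∑ k ∈ range (2*m), g k = ∑ n ∈ range m, g (2*n) := by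
  induction m with
  | zero => simp
  | succ m ih =>
    rw [show 2*(m+1) = 2*m+1+1 by ring, sum_range_succ, sum_range_succ, ih,
      hodd (2*m+1) ⟨m, by ring⟩, add_zero, sum_range_succ]

lemma my_range_split (t : ℕ) (ht : 1 ≤ t) (f : ℕ → ℚ) :
    ∑ n ∈ range t, f n = f 0 + ∑ n ∈ Icc 1 (t-1), f n := by
  have h : Icc 1 (t-1) = Ico 1 t := by rw [← Finset.Ico_add_one_right_eq_Icc]; congr 1; omega
  rw [h, range_eq_Ico, ← Finset.sum_Ico_consecutive f (by omega : (0:ℕ) ≤ 1) (by omega : 1 ≤ t)]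
  simp

lemma my_key (p M κ : ℕ) (hκ : κ = 0 ∨ κ = 1) (hp : 1 ≤ p) :
    ((p:ℚ)+1) * 2^p * ((∑ k ∈ range (M+κ), (k:ℚ)^p) + (∑ k ∈ range (M+1), (k:ℚ)^p))
      = ((2*M+κ:ℕ):ℚ)^(p+1)
        + (∑ n ∈ Icc 1 (p/2), ((p+1).choose (2*n) : ℚ)
            * (Polynomial.bernoulli (2*n)).eval ((κ:ℚ)/2) * 2^(2*n) * ((2*M+κ:ℕ):ℚ)^(p+1-2*n))
        + 2^(p+1) * ((Polynomial.bernoulli (p+1)).eval ((κ:ℚ)/2) - _root_.bernoulli (p+1)) := by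
  set a : ℚ := (κ:ℚ)/2 with ha
  set y : ℚ := ((2*M+κ:ℕ):ℚ)/2 with hy
  have h2y : 2*y = ((2*M+κ:ℕ):ℚ) := by rw [hy]; ring
  have h1 : ((M+κ:ℕ):ℚ) = a + y := by rw [ha, hy]; push_cast; ring
  have h2 : ((M+1:ℕ):ℚ) = (1-a) + y := by rw [ha, hy]; push_cast; ring
  have F1 := Polynomial.sum_range_pow_eq_bernoulli_sub (M+κ) p
  have F2 := Polynomial.sum_range_pow_eq_bernoulli_sub (M+1) p
  rw [Nat.cast_add] at F1 F2
  -- combine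
  have hLHS : ((p:ℚ)+1) * 2^p * ((∑ k ∈ range (M+κ), (k:ℚ)^p) + (∑ k ∈ range (M+1), (k:ℚ)^p))
      = 2^p * ((Polynomial.bernoulli (p+1)).eval (a+y)
          + (Polynomial.bernoulli (p+1)).eval ((1-a)+y))
        - 2^(p+1) * _root_.bernoulli (p+1) := by
    have e1 : ((p:ℚ)+1) * (∑ k ∈ range (M+κ), (k:ℚ)^p)
        = (Polynomial.bernoulli (p+1)).eval (a+y) - _root_.bernoulli (p+1) := by
      rw [← h1]; exact_mod_cast F1
    have e2 : ((p:ℚ)+1) * (∑ k ∈ range (M+1), (k:ℚ)^p)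
        = (Polynomial.bernoulli (p+1)).eval ((1-a)+y) - _root_.bernoulli (p+1) := by
      rw [← h2]; exact_mod_cast F2
    calc ((p:ℚ)+1) * 2^p * ((∑ k ∈ range (M+κ), (k:ℚ)^p) + (∑ k ∈ range (M+1), (k:ℚ)^p))
        = 2^p * (((p:ℚ)+1) * (∑ k ∈ range (M+κ), (k:ℚ)^p)
            + ((p:ℚ)+1) * (∑ k ∈ range (M+1), (k:ℚ)^p)) := by ring
      _ = _ := by rw [e1, e2]; ring
  rw [hLHS]
  -- expand the two bernoulli evaluations
  have hexp : (Polynomial.bernoulli (p+1)).eval (a+y)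
      + (Polynomial.bernoulli (p+1)).eval ((1-a)+y)
      = ∑ k ∈ range (p+2), ((p+1).choose k : ℚ) * (Polynomial.bernoulli k).eval a
          * y^(p+1-k) * (1+(-1:ℚ)^k) := by
    rw [my_bernoulli_eval_add (p+1) a y, my_bernoulli_eval_add (p+1) (1-a) y,
      ← sum_add_distrib]
    refine sum_congr rfl fun k hk => ?_
    rw [my_bernoulli_eval_one_sub k a]
    ring
  rw [hexp]
  set g : ℕ → ℚ := fun k => ((p+1).choose k : ℚ) * (Polynomial.bernoulli k).eval a
      * y^(p+1-k) * (1+(-1:ℚ)^k) with hg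
  have hodd : ∀ k, Odd k → g k = 0 := by
    intro k hk
    rw [hg]
    simp only [hk.neg_one_pow]
    ring
  have hg0 : g 0 = 2 * y^(p+1) := by
    rw [hg]
    simp only [Nat.choose_zero_right, Nat.cast_one, Polynomial.bernoulli_zero, eval_one,
      Nat.sub_zero, pow_zero]
    ring
  have hterm : ∀ n ∈ Icc 1 (p/2), (2:ℚ)^p * g (2*n)
      = ((p+1).choose (2*n) : ℚ) * (Polynomial.bernoulli (2*n)).eval a * 2^(2*n)
          * ((2*M+κ:ℕ):ℚ)^(p+1-2*n) := by
    intro n hn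
    rw [mem_Icc] at hn
    have h2n : 2*n ≤ p := by omega
    rw [hg]
    have : (2:ℚ)^p * (1+(-1:ℚ)^(2*n)) = 2^(p+1) := by
      have hm1 : ((-1:ℚ))^(2*n) = 1 := by rw [pow_mul]; norm_num
      rw [hm1, pow_succ]; ring
    have hsplit : (2:ℚ)^(p+1) = 2^(2*n) * 2^(p+1-2*n) := by
      rw [← pow_add]; congr 1; omega
    have hNy : (2:ℚ)^(p+1-2*n) * y^(p+1-2*n) = ((2*M+κ:ℕ):ℚ)^(p+1-2*n) := by
      rw [← mul_pow, h2y]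
    calc (2:ℚ)^p * (((p+1).choose (2*n) : ℚ) * (Polynomial.bernoulli (2*n)).eval a
          * y^(p+1-2*n) * (1+(-1:ℚ)^(2*n)))
        = ((2:ℚ)^p * (1+(-1:ℚ)^(2*n))) * (((p+1).choose (2*n) : ℚ)
            * (Polynomial.bernoulli (2*n)).eval a * y^(p+1-2*n)) := by ring
      _ = ((p+1).choose (2*n) : ℚ) * (Polynomial.bernoulli (2*n)).eval a * 2^(2*n)
            * ((2*M+κ:ℕ):ℚ)^(p+1-2*n) := by
          rw [this, hsplit, ← hNy]; ring
  have hg0' : (2:ℚ)^p * g 0 = ((2*M+κ:ℕ):ℚ)^(p+1) := by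
    rw [hg0, ← h2y, mul_pow, pow_succ]; ring
  rcases Nat.even_or_odd p with hpe | hpo
  · -- p even
    obtain ⟨t, ht⟩ := hpe
    have hB : (Polynomial.bernoulli (p+1)).eval a = 0 := by
      have hodd' : Odd (p+1) := by refine ⟨t, by omega⟩
      rcases hκ with h | h
      · rw [ha, h]
        norm_num
        exact my_bernoulli_odd_zero hodd' (by omega)
      · rw [ha, h]
        norm_num
        exact my_bernoulli_eval_half_odd hodd'
    have hrange : p + 2 = 2 * (p/2 + 1) := by omega
    rw [hrange, my_sum_even_split _ g hodd,
      my_range_split (p/2+1) (by omega) (fun n => g (2*n))]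
    simp only [Nat.add_sub_cancel, Nat.mul_zero]
    rw [mul_add, Finset.mul_sum, sum_congr rfl hterm, hg0', hB]
    ring
  · -- p odd
    obtain ⟨t, ht⟩ := hpo
    have hrange : p + 2 = 2 * (t+1) + 1 := by omega
    rw [hrange, sum_range_succ, my_sum_even_split _ g hodd,
      my_range_split (t+1) (by omega) (fun n => g (2*n))]
    simp only [Nat.add_sub_cancel, Nat.mul_zero]
    have htop : (2:ℚ)^p * g (2*(t+1)) = 2^(p+1) * (Polynomial.bernoulli (p+1)).eval a := by
      rw [hg]
      have h1 : 2*(t+1) = p+1 := by omega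
      rw [h1]
      simp only [Nat.choose_self, Nat.cast_one, Nat.sub_self, pow_zero]
      have : ((-1:ℚ))^(p+1) = 1 := by
        refine Even.neg_one_pow ⟨t+1, by omega⟩
      rw [this]
      ring
    have hicc : Icc 1 t = Icc 1 (p/2) := by congr 1; omega
    rw [hicc, mul_add, mul_add, Finset.mul_sum, sum_congr rfl hterm, hg0', htop]
    ring

lemma my_norm_aux (L : ℝ) (hL : 0 < L) (N r : ℕ) (hN : 0 < N) (hr : r ≤ N) :
    ‖(((r:ℝ) * (L/(N:ℝ))) : AddCircle L)‖ = (L/(N:ℝ)) * ((min r (N - r) : ℕ):ℝ) := by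
  have hN0 : (0:ℝ) < (N:ℝ) := by exact_mod_cast hN
  have hNne : (N:ℝ) ≠ 0 := ne_of_gt hN0
  have hrle : (r:ℝ) ≤ N := by exact_mod_cast hr
  rw [AddCircle.norm_eq]
  have hx : L⁻¹ * ((r:ℝ) * (L/(N:ℝ))) = (r:ℝ)/N := by field_simp
  rw [hx]
  rcases lt_or_ge (2*r) N with h2r | h2r
  · have h2r' : (2*r:ℝ) < N := by exact_mod_cast h2r
    have hlt : (r:ℝ)/N < 1/2 := by rw [div_lt_iff₀ hN0]; linarith
    have hge : (0:ℝ) ≤ (r:ℝ)/N := by positivity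
    have hround : round ((r:ℝ)/N) = 0 := by
      rw [round_eq]
      have : ⌊(r:ℝ)/N + 1/2⌋ = 0 := by
        rw [Int.floor_eq_zero_iff]
        constructor <;> simp <;> linarith
      exact this
    rw [hround]
    have hmin : min r (N - r) = r := min_eq_left (by omega)
    rw [hmin, Int.cast_zero, zero_mul, sub_zero, abs_of_nonneg (by positivity)]
    ring
  · have h2r' : (N:ℝ) ≤ 2*r := by exact_mod_cast h2r
    have hge : (1:ℝ)/2 ≤ (r:ℝ)/N := by rw [le_div_iff₀ hN0]; linarith
    have hle1 : (r:ℝ)/N ≤ 1 := by rw [div_le_one hN0]; linarith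
    have hround : round ((r:ℝ)/N) = 1 := by
      rw [round_eq]
      rw [Int.floor_eq_iff]
      constructor <;> push_cast <;> linarith
    rw [hround]
    have hmin : min r (N - r) = N - r := min_eq_right (by omega)
    rw [hmin]
    have hcast : ((N - r : ℕ):ℝ) = (N:ℝ) - r := by
      rw [Nat.cast_sub hr]
    rw [hcast, Int.cast_one, one_mul]
    have hkey : (r:ℝ)*(L/(N:ℝ)) - L = -((L/(N:ℝ))*((N:ℝ)-r)) := by
      field_simp
      ring
    rw [hkey, abs_neg, abs_of_nonneg (mul_nonneg (by positivity) (by linarith))]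

lemma my_coe_mod (L : ℝ) (N : ℕ) (hN : 0 < N) (a b : ℕ) (h : a % N = b % N) :
    (((a:ℝ) * (L/(N:ℝ))) : AddCircle L) = (((b:ℝ) * (L/(N:ℝ))) : AddCircle L) := by
  have hNne : (N:ℝ) ≠ 0 := by positivity
  rw [QuotientAddGroup.eq_iff_sub_mem, AddSubgroup.mem_zmultiples_iff]
  have h' : Nat.ModEq N a b := h
  have hdvd : (N:ℤ) ∣ (b:ℤ) - (a:ℤ) := (Nat.modEq_iff_dvd).mp h'
  obtain ⟨k, hk⟩ := hdvd
  refine ⟨-k, ?_⟩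
  have hR : (b:ℝ) - (a:ℝ) = (N:ℝ) * (k:ℝ) := by exact_mod_cast congrArg (Int.cast : ℤ → ℝ) hk
  have hab : (a:ℝ) = (b:ℝ) - (N:ℝ)*(k:ℝ) := by linarith
  rw [zsmul_eq_mul, hab]
  push_cast
  field_simp
  ring

lemma my_dist (L : ℝ) (hL : 0 < L) (N : ℕ) (hN2 : 2 ≤ N) (j d : Fin N) :
    dist ((((j:ℕ):ℝ) * (L/(N:ℝ)) : ℝ) : AddCircle L)
        (((((j - d : Fin N):ℕ):ℝ) * (L/(N:ℝ)) : ℝ) : AddCircle L)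
      = (L/(N:ℝ)) * ((min (d:ℕ) (N - (d:ℕ)) : ℕ):ℝ) := by
  have hN : 0 < N := by omega
  haveI : NeZero N := ⟨by omega⟩
  have hcoe : ((((j:ℕ):ℝ) * (L/(N:ℝ)) : ℝ) : AddCircle L)
      = (((((j - d : Fin N):ℕ) + (d:ℕ) : ℕ):ℝ) * (L/(N:ℝ)) : ℝ) := by
    apply my_coe_mod L N hN
    have h1 : (j - d) + d = j := sub_add_cancel j d
    have h2 : ((j - d) + d : Fin N).val = (((j-d).val + d.val) % N) := Fin.add_def _ _ ▸ rfl
    rw [Nat.mod_eq_of_lt j.isLt, ← h2, h1]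
  rw [hcoe, dist_eq_norm]
  have hsub : ((((((j - d : Fin N):ℕ) + (d:ℕ) : ℕ):ℝ) * (L/(N:ℝ)) : ℝ) : AddCircle L)
      - (((((j - d : Fin N):ℕ):ℝ) * (L/(N:ℝ)) : ℝ) : AddCircle L)
      = ((((d:ℕ):ℝ) * (L/(N:ℝ)) : ℝ) : AddCircle L) := by
    rw [← AddCircle.coe_sub]
    congr 1
    push_cast
    ring
  rw [hsub, my_norm_aux L hL N (d:ℕ) hN (le_of_lt d.isLt)]

lemma my_T_split (p N M κ : ℕ) (hκ : κ = 0 ∨ κ = 1) (hN : N = 2*M+κ) (h2 : 2 ≤ N)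
    (hp : 1 ≤ p) :
    ∑ r ∈ Ico 1 N, ((min r (N - r) : ℕ):ℝ)^p
      = (∑ k ∈ range (M+κ), (k:ℝ)^p) + (∑ k ∈ range (M+1), (k:ℝ)^p) := by
  have hκle : κ ≤ 1 := by rcases hκ with h|h <;> omega
  have hM1 : 1 ≤ M + 1 := by omega
  have hMN : M + 1 ≤ N := by omega
  rw [← Finset.sum_Ico_consecutive _ hM1 hMN]
  have hfirst : ∑ r ∈ Ico 1 (M+1), ((min r (N - r) : ℕ):ℝ)^p
      = ∑ k ∈ range (M+1), (k:ℝ)^p := by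
    have h1 : ∀ r ∈ Ico 1 (M+1), ((min r (N - r) : ℕ):ℝ)^p = (r:ℝ)^p := by
      intro r hr
      rw [mem_Ico] at hr
      rw [min_eq_left (by omega)]
    rw [sum_congr rfl h1, range_eq_Ico,
      ← Finset.sum_Ico_consecutive (fun k : ℕ => (k:ℝ)^p) (by omega : (0:ℕ) ≤ 1)
        (by omega : 1 ≤ M+1)]
    have h0 : ∑ r ∈ Ico (0:ℕ) 1, (r:ℝ)^p = 0 := by
      simp [zero_pow (by omega : p ≠ 0)]
    rw [h0, zero_add]
  have hsecond : ∑ r ∈ Ico (M+1) N, ((min r (N - r) : ℕ):ℝ)^p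
      = ∑ k ∈ range (M+κ), (k:ℝ)^p := by
    have hb : ∑ r ∈ Ico (M+1) N, ((min r (N - r) : ℕ):ℝ)^p
        = ∑ m ∈ Ico 1 (M+κ), (m:ℝ)^p := by
      refine Finset.sum_nbij' (fun r => N - r) (fun m => N - m) ?_ ?_ ?_ ?_ ?_
      · intro r hr; rw [mem_Ico] at hr; show N - r ∈ Ico 1 (M+κ); rw [mem_Ico]; omega
      · intro m hm; rw [mem_Ico] at hm; show N - m ∈ Ico (M+1) N; rw [mem_Ico]; omega
      · intro r hr; rw [mem_Ico] at hr; show N - (N - r) = r; omega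
      · intro m hm; rw [mem_Ico] at hm; show N - (N - m) = m; omega
      · intro r hr
        rw [mem_Ico] at hr
        show ((min r (N - r) : ℕ):ℝ)^p = ((N - r : ℕ):ℝ)^p
        rw [min_eq_right (by omega)]
    rw [hb, range_eq_Ico]
    rcases Nat.eq_zero_or_pos (M+κ) with h0 | h0
    · rw [h0]; simp
    rw [← Finset.sum_Ico_consecutive (fun k : ℕ => (k:ℝ)^p) (by omega : (0:ℕ) ≤ 1)
      (by omega : 1 ≤ M+κ)]
    have h00 : ∑ r ∈ Ico (0:ℕ) 1, (r:ℝ)^p = 0 := by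
      simp [zero_pow (by omega : p ≠ 0)]
    rw [h00, zero_add]
  rw [hfirst, hsecond]
  ring


end MyAux

/-- **Exact formula for the geodesic Riesz `(−p)`-energy of equally spaced points**
(Proposition 11): for `N = 2M + κ ≥ 2` with `κ ∈ {0,1}`, the sum of the `p`-th powers of
the geodesic distances between the `N` equally spaced points `z_j = j·(L/N) mod L` equals
`[(L/2)^p/(p+1)]·N² + [(L/2)^p/(p+1)]·Σ_{n=1}^{⌊p/2⌋} C(p+1,2n)·B_{2n}(κ/2)·2^{2n}·N^{2−2n}
+ [2L^p/(p+1)]·(B_{p+1}(κ/2) − B_{p+1})·N^{1−p}`, the last term vanishing for even `p`. -/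
theorem riesz_neg_p_energy_exact
    (L : ℝ) (hL : 0 < L) (p : ℕ) (hp : 1 ≤ p)
    (N M κ : ℕ) (hκ : κ = 0 ∨ κ = 1) (hNM : N = 2 * M + κ) (hN : 2 ≤ N) :
    (∑ j : Fin N, ∑ k : Fin N, if j ≠ k then
        (dist ((((j : ℕ) : ℝ) * (L / N) : ℝ) : AddCircle L)
          ((((k : ℕ) : ℝ) * (L / N) : ℝ) : AddCircle L)) ^ p else 0)
      = (L / 2) ^ p / ((p : ℝ) + 1) * (N : ℝ) ^ 2
        + (L / 2) ^ p / ((p : ℝ) + 1)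
          * (∑ n ∈ Finset.Icc 1 (p / 2),
              ((p + 1).choose (2 * n) : ℝ)
                * (Polynomial.aeval ((κ : ℝ) / 2) (Polynomial.bernoulli (2 * n)))
                * 2 ^ (2 * n) * (N : ℝ) ^ ((2 : ℤ) - 2 * n))
        + 2 * L ^ p / ((p : ℝ) + 1)
          * ((Polynomial.aeval ((κ : ℝ) / 2) (Polynomial.bernoulli (p + 1)))
              - ((bernoulli (p + 1) : ℚ) : ℝ)) * (N : ℝ) ^ ((1 : ℤ) - p)
      ∧ (Even p →
          2 * L ^ p / ((p : ℝ) + 1)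
            * ((Polynomial.aeval ((κ : ℝ) / 2) (Polynomial.bernoulli (p + 1)))
                - ((bernoulli (p + 1) : ℚ) : ℝ)) * (N : ℝ) ^ ((1 : ℤ) - p) = 0) := by
  haveI : NeZero N := ⟨by omega⟩
  have hNpos : 0 < N := by omega
  have hN0 : (0:ℝ) < (N:ℝ) := by exact_mod_cast hNpos
  have hNne : (N:ℝ) ≠ 0 := ne_of_gt hN0
  have haev : ∀ m : ℕ, (Polynomial.aeval ((κ:ℝ)/2) (Polynomial.bernoulli m) : ℝ)
      = (((Polynomial.bernoulli m).eval ((κ:ℚ)/2) : ℚ) : ℝ) := by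
    intro m
    have hx : ((κ:ℝ)/2) = algebraMap ℚ ℝ ((κ:ℚ)/2) := by
      rw [eq_ratCast (algebraMap ℚ ℝ)]
      push_cast
      ring
    rw [hx, Polynomial.aeval_def, Polynomial.eval₂_at_apply, eq_ratCast]
  have heven : Even p → (2 * L ^ p / ((p : ℝ) + 1)
      * ((Polynomial.aeval ((κ : ℝ) / 2) (Polynomial.bernoulli (p + 1)))
          - ((bernoulli (p + 1) : ℚ) : ℝ)) * (N : ℝ) ^ ((1 : ℤ) - p) = 0) := by
    rintro ⟨t, ht⟩
    have hodd : Odd (p+1) := ⟨t, by omega⟩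
    have hb : _root_.bernoulli (p+1) = 0 := my_bernoulli_odd_zero hodd (by omega)
    have hB : (Polynomial.bernoulli (p+1)).eval ((κ:ℚ)/2) = 0 := by
      rcases hκ with h | h
      · rw [h]
        simp [hb]
      · rw [h, Nat.cast_one]
        exact my_bernoulli_eval_half_odd hodd
    rw [haev, hB, hb]
    norm_num
  refine ⟨?_, heven⟩
  set S : ℝ := (∑ k ∈ range (M+κ), (k:ℝ)^p) + (∑ k ∈ range (M+1), (k:ℝ)^p) with hS
  have hLHS : (∑ j : Fin N, ∑ k : Fin N, if j ≠ k then
        (dist ((((j : ℕ) : ℝ) * (L / N) : ℝ) : AddCircle L)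
          ((((k : ℕ) : ℝ) * (L / N) : ℝ) : AddCircle L)) ^ p else 0)
      = (N:ℝ) * ((L/(N:ℝ))^p * S) := by
    have hinner : ∀ j : Fin N, (∑ k : Fin N, if j ≠ k then
          (dist ((((j : ℕ) : ℝ) * (L / N) : ℝ) : AddCircle L)
            ((((k : ℕ) : ℝ) * (L / N) : ℝ) : AddCircle L)) ^ p else 0)
        = ∑ r ∈ Ico 1 N, ((L/(N:ℝ)) * ((min r (N - r) : ℕ):ℝ))^p := by
      intro j
      rw [← Equiv.sum_comp (Equiv.subLeft j) (fun k : Fin N => if j ≠ k then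
          (dist ((((j : ℕ) : ℝ) * (L / N) : ℝ) : AddCircle L)
            ((((k : ℕ) : ℝ) * (L / N) : ℝ) : AddCircle L)) ^ p else 0)]
      have hpt : ∀ d : Fin N, (if j ≠ (Equiv.subLeft j) d then
            (dist ((((j : ℕ) : ℝ) * (L / N) : ℝ) : AddCircle L)
              (((((Equiv.subLeft j d : Fin N) : ℕ) : ℝ) * (L / N) : ℝ) : AddCircle L)) ^ p else 0)
          = (fun r : ℕ => if r ≠ 0 then ((L/(N:ℝ)) * ((min r (N - r) : ℕ):ℝ))^p else 0)
              ((d : Fin N) : ℕ) := by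
        intro d
        have hsl : (Equiv.subLeft j) d = j - d := rfl
        by_cases hd : d = 0
        · subst hd
          simp [hsl]
        · have hne : j ≠ j - d := by
            intro hcontra
            exact hd (sub_eq_self.mp hcontra.symm)
          have hdval : (d : ℕ) ≠ 0 := by
            intro h0
            exact hd (Fin.ext (by simp [h0]))
          simp only [hsl]
          rw [if_pos hne, if_pos hdval, my_dist L hL N hN j d]
      rw [Fintype.sum_congr _ _ hpt]
      rw [Fin.sum_univ_eq_sum_range
        (fun r : ℕ => if r ≠ 0 then ((L/(N:ℝ)) * ((min r (N - r) : ℕ):ℝ))^p else 0) N]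
      rw [range_eq_Ico, ← Finset.sum_Ico_consecutive
        (fun r : ℕ => if r ≠ 0 then ((L/(N:ℝ)) * ((min r (N - r) : ℕ):ℝ))^p else 0)
        (by omega : (0:ℕ) ≤ 1) (by omega : 1 ≤ N)]
      have h0 : ∑ r ∈ Ico (0:ℕ) 1,
          (if r ≠ 0 then ((L/(N:ℝ)) * ((min r (N - r) : ℕ):ℝ))^p else 0) = 0 := by
        simp
      rw [h0, zero_add]
      refine sum_congr rfl fun r hr => ?_
      rw [mem_Ico] at hr
      rw [if_pos (by omega : r ≠ 0)]
    rw [Finset.sum_congr rfl (fun j _ => hinner j), Finset.sum_const, card_univ,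
      Fintype.card_fin, nsmul_eq_mul]
    congr 1
    rw [hS, ← my_T_split p N M κ hκ hNM hN hp, Finset.mul_sum]
    refine sum_congr rfl fun r hr => ?_
    rw [mul_pow]
  rw [hLHS]
  have hz1 : (N:ℝ)^((1:ℤ) - p) = ((N:ℝ)^(p-1))⁻¹ := by
    have he : ((1:ℤ) - p) = 0 - ((p-1:ℕ):ℤ) := by omega
    rw [he, zpow_sub₀ hNne, zpow_zero, zpow_natCast, one_div]
  have hzsum : (∑ n ∈ Finset.Icc 1 (p / 2),
        ((p + 1).choose (2 * n) : ℝ)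
          * (Polynomial.aeval ((κ : ℝ) / 2) (Polynomial.bernoulli (2 * n)))
          * 2 ^ (2 * n) * (N : ℝ) ^ ((2 : ℤ) - 2 * n))
      = (∑ n ∈ Finset.Icc 1 (p / 2),
          ((p + 1).choose (2 * n) : ℝ)
            * (Polynomial.aeval ((κ : ℝ) / 2) (Polynomial.bernoulli (2 * n)))
            * 2 ^ (2 * n) * (N : ℝ) ^ (p + 1 - 2 * n)) * ((N:ℝ)^(p-1))⁻¹ := by
    rw [Finset.sum_mul]
    refine sum_congr rfl fun n hn => ?_
    rw [mem_Icc] at hn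
    have h2n : 2*n ≤ p := by omega
    have hze : ((2:ℤ) - 2*(n:ℤ)) = ((p+1-2*n : ℕ) : ℤ) - ((p-1 : ℕ) : ℤ) := by omega
    rw [hze, zpow_sub₀ hNne, zpow_natCast, zpow_natCast, div_eq_mul_inv]
    ring
  rw [hz1, hzsum]
  set A : ℝ := ∑ n ∈ Finset.Icc 1 (p / 2),
      ((p + 1).choose (2 * n) : ℝ)
        * (Polynomial.aeval ((κ : ℝ) / 2) (Polynomial.bernoulli (2 * n)))
        * 2 ^ (2 * n) * (N : ℝ) ^ (p + 1 - 2 * n) with hA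
  set D : ℝ := (Polynomial.aeval ((κ : ℝ) / 2) (Polynomial.bernoulli (p + 1)))
      - ((bernoulli (p + 1) : ℚ) : ℝ) with hD
  have hkeyR : ((p:ℝ)+1) * 2^p * S = (N:ℝ)^(p+1) + A + 2^(p+1) * D := by
    rw [hA, hD, hS, hNM]
    simp only [haev]
    exact_mod_cast my_key p M κ hκ hp
  obtain ⟨q, rfl⟩ : ∃ q, p = q + 1 := ⟨p - 1, by omega⟩
  simp only [Nat.add_sub_cancel] at hkeyR ⊢
  have hden : ((q:ℝ)+1+1) ≠ 0 := by positivity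
  have hSval : S = ((N:ℝ)^(q+1+1) + A + 2^(q+1+1) * D) / (((q:ℝ)+1+1) * 2^(q+1)) := by
    rw [eq_div_iff (by positivity)]
    push_cast at hkeyR
    linear_combination hkeyR
  rw [hSval]
  push_cast
  field_simp
  have h1 : (N:ℝ) * (N:ℝ)⁻¹ = 1 := mul_inv_cancel₀ hNne
  have hu : (N:ℝ)^q * ((N:ℝ)⁻¹)^q = 1 := by rw [← mul_pow, h1, one_pow]
  have hw : ((1:ℝ)/2)^q * 2^q = 1 := by rw [← mul_pow]; norm_num
  linear_combination (L*L^q*A + (N:ℝ)^2*(N:ℝ)^q*L*L^q)*((N:ℝ)^q*((N:ℝ)⁻¹)^q*h1 + hu - hw)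
    + L*L^q*D*2^q*4*((N:ℝ)^q*((N:ℝ)⁻¹)^q*h1 + hu)
end
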